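/- arXiv:1908.05220 — 11 statements merged into one kernel-verified Lean document; each statement's English description precedes it below -/
import Mathlib

section
/- If A, B, C are finite sets of natural numbers with A = B + C (sumset), min(A) = 0, max(A) ≤ k, and max(B) ≤ max(C), then defining C_B = C ∪ {s ∈ [0,k] \ A : s < max(B)} ∪ {s - max(B) : s ∈ [0,k] \ A, s ≥ max(B)}, we have B + C_B = {0, 1, ..., k}. -/
open Pointwise

/-- The `k`-promotion of a factor: given the other factor's max `m`, append to `S`
each missing element `s ∈ [0,k] \ A` with `s < m`, and `s - m` for `s ≥ m`. -/
def promote (k : ℕ) (A S : Finset ℕ) (m : ℕ) : Finset ℕ :=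
  S ∪ ((Finset.range (k + 1) \ A).filter (· < m)) ∪
    (((Finset.range (k + 1) \ A).filter (m ≤ ·)).image (· - m))

theorem stmt0 (k : ℕ) (A B C : Finset ℕ) (hB : B.Nonempty) (hC : C.Nonempty)
    (hsum : A = B + C) (h0 : 0 ∈ A) (hmin : A.min' ⟨0, h0⟩ = 0)
    (hmax : ∀ a ∈ A, a ≤ k)
    (hBC : B.max' hB ≤ C.max' hC) :
    B + promote k A C (B.max' hB) = Finset.range (k + 1) := by
  have h00 : 0 ∈ B ∧ 0 ∈ C := by
    rw [hsum, Finset.mem_add] at h0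
    obtain ⟨b, hb, c, hc, hbc⟩ := h0
    have hb0 : b = 0 := by omega
    have hc0 : c = 0 := by omega
    exact ⟨hb0 ▸ hb, hc0 ▸ hc⟩
  have hmB : B.max' hB ∈ B := B.max'_mem hB
  have hmC : C.max' hC ∈ C := C.max'_mem hC
  have hmk : B.max' hB + C.max' hC ≤ k :=
    hmax _ (hsum ▸ Finset.add_mem_add hmB hmC)
  ext t
  simp only [Finset.mem_range, promote, Finset.mem_add, Finset.mem_union,
    Finset.mem_image, Finset.mem_filter, Finset.mem_sdiff, Finset.mem_range]
  constructor
  · rintro ⟨b, hb, s, hs, rfl⟩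
    have hbm : b ≤ B.max' hB := B.le_max' b hb
    rcases hs with (hsC | ⟨⟨hsk, _⟩, hsm⟩) | ⟨s', ⟨⟨hs'k, _⟩, hms'⟩, rfl⟩
    · have : b + s ∈ A := hsum ▸ Finset.add_mem_add hb hsC
      have := hmax _ this
      omega
    · omega
    · omega
  · intro ht
    by_cases htA : t ∈ A
    · rw [hsum, Finset.mem_add] at htA
      obtain ⟨b, hb, c, hc, hbc⟩ := htA
      exact ⟨b, hb, c, Or.inl (Or.inl hc), hbc⟩
    · by_cases htm : t < B.max' hB
      · exact ⟨0, h00.1, t, Or.inl (Or.inr ⟨⟨ht, htA⟩, htm⟩), by omega⟩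
      · exact ⟨B.max' hB, hmB, t - B.max' hB,
          Or.inr ⟨t, ⟨⟨ht, htA⟩, by omega⟩, rfl⟩, by omega⟩
end

section
/- Let k ≥ 3 be odd and let A be a 0-rooted finite subset of {0,...,k} with A ≠ {0,...,k}. Then there is no pair of finite sets C, D ⊆ ℕ with D + C = A, max(C) ≥ max(D), and D = {0, (k+1)/2}; moreover if B + C = A with max(B) ≥ max(C) then the k-promoted set B_C (where B_C = B ∪ {s ∈ [0,k]\A : s < max(C)} ∪ {s - max(C) : s ∈ [0,k]\A, s ≥ max(C)}) never equals {0, (k+1)/2}. -/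
open Pointwise

theorem stmt1 (k : ℕ) (hk : 3 ≤ k) (hodd : Odd k) (A : Finset ℕ)
    (h0 : 0 ∈ A) (hsub : A ⊆ Finset.range (k + 1)) (hne : A ≠ Finset.range (k + 1)) :
    (¬ ∃ (C : Finset ℕ) (hC : C.Nonempty),
        ({0, (k + 1) / 2} : Finset ℕ) + C = A ∧ (k + 1) / 2 ≤ C.max' hC) ∧
    (∀ (B C : Finset ℕ) (hB : B.Nonempty) (hC : C.Nonempty),
        B + C = A → C.max' hC ≤ B.max' hB →
        promote k A B (C.max' hC) ≠ ({0, (k + 1) / 2} : Finset ℕ)) := by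
  obtain ⟨j, hj⟩ := hodd
  set h := (k + 1) / 2 with hh
  have hhk : k = 2 * h - 1 ∧ 2 ≤ h := by omega
  constructor
  · rintro ⟨C, hC, hsum, hmax⟩
    have h1 : h + C.max' hC ∈ A := by
      rw [← hsum]
      exact Finset.add_mem_add (by simp) (C.max'_mem hC)
    have := Finset.mem_range.mp (hsub h1)
    omega
  · intro B C hB hC hsum hle hP
    set m := C.max' hC with hm
    have h0BC : (0 : ℕ) ∈ B + C := by rw [hsum]; exact h0
    obtain ⟨b0, hb0, c0, hc0, hbc0⟩ := Finset.mem_add.mp h0BC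
    have h0B : 0 ∈ B := by
      have e : b0 = 0 := by omega
      rwa [e] at hb0
    have h0C : 0 ∈ C := by
      have e : c0 = 0 := by omega
      rwa [e] at hc0
    have hmC : m ∈ C := C.max'_mem hC
    have hMB : B.max' hB ∈ B := B.max'_mem hB
    have hAdd : ∀ b ∈ B, ∀ c ∈ C, b + c ∈ A := by
      intro b hb c hc
      rw [← hsum]; exact Finset.add_mem_add hb hc
    have hAle : ∀ a ∈ A, a ≤ k := fun a ha => Nat.lt_succ_iff.mp (Finset.mem_range.mp (hsub ha))
    -- every element of B is 0 or h
    have hBsub : ∀ b ∈ B, b = 0 ∨ b = h := by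
      intro b hb
      have : b ∈ promote k A B m := by
        simp only [promote, Finset.mem_union]
        left; left; exact hb
      rw [hP] at this
      simpa using this
    -- missing elements map into {0, h}
    have hR : ∀ r, r < k + 1 → r ∉ A →
        (r < m → (r = 0 ∨ r = h)) ∧ (m ≤ r → (r - m = 0 ∨ r - m = h)) := by
      intro r hr hrA
      constructor
      · intro hlt
        have : r ∈ promote k A B m := by
          simp only [promote, Finset.mem_union, Finset.mem_filter, Finset.mem_sdiff,
            Finset.mem_range]
          left; right; exact ⟨⟨hr, hrA⟩, hlt⟩
        rw [hP] at this
        simpa using this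
      · intro hge
        have : r - m ∈ promote k A B m := by
          simp only [promote, Finset.mem_union, Finset.mem_filter, Finset.mem_sdiff,
            Finset.mem_range, Finset.mem_image]
          right; exact ⟨r, ⟨⟨hr, hrA⟩, hge⟩, rfl⟩
        rw [hP] at this
        simpa using this
    -- there is a missing element
    obtain ⟨r0, hr0k, hr0A⟩ : ∃ r, r < k + 1 ∧ r ∉ A := by
      by_contra hcon
      push_neg at hcon
      exact hne (Finset.Subset.antisymm hsub fun x hx => hcon x (Finset.mem_range.mp hx))
    by_cases hhB : h ∈ B
    · -- max of B is h, so m ≤ h - 1 (since h + m ∈ A ≤ k)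
      have hMh : B.max' hB = h := by
        rcases hBsub _ hMB with h1 | h1
        · have := B.le_max' h hhB; omega
        · exact h1
      have hhmA : h + m ∈ A := hAdd h hhB m hmC
      have hhmk : h + m ≤ k := hAle _ hhmA
      have hmh : m ≤ h - 1 := by omega
      by_cases hkA : k ∈ A
      · -- then m = h - 1 and h - 1 ∈ A
        have : k ∈ B + C := by rw [hsum]; exact hkA
        obtain ⟨b, hb, c, hc, hbc⟩ := Finset.mem_add.mp this
        have hcm : c ≤ m := C.le_max' c hc
        have hbh : b = 0 ∨ b = h := hBsub b hb
        have hch : c = h - 1 ∧ m = h - 1 := by rcases hbh with h1 | h1 <;> omega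
        have hh1A : h - 1 ∈ A := by
          have := hAdd 0 h0B c hc
          simpa [hch.1] using this
        rcases hR r0 hr0k hr0A with ⟨hlt, hge⟩
        have hr00 : r0 ≠ 0 := fun e => hr0A (e ▸ h0)
        rcases Nat.lt_or_ge r0 m with hc1 | hc1
        · rcases hlt hc1 with e | e <;> omega
        · rcases hge hc1 with e | e
          · refine hr0A ?_
            have e2 : r0 = h - 1 := by omega
            rwa [e2]
          · refine hr0A ?_
            have e2 : r0 = h + m := by omega
            rwa [e2]
      · -- k ∉ A forces m = h - 1 and then h + m = k ∈ A, contradiction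
        have hmk : m ≤ k := by omega
        rcases (hR k (by omega) hkA).2 hmk with e | e
        · omega
        · refine hkA ?_
          have e2 : k = h + m := by omega
          rwa [e2]
    · -- B ⊆ {0}, so m = 0 and A ⊆ {0}; then 1 is missing and maps to 1 ∉ {0, h}
      have hM0 : B.max' hB = 0 := by
        rcases hBsub _ hMB with h1 | h1
        · exact h1
        · exact absurd (h1 ▸ hMB) hhB
      have hm0 : m = 0 := by omega
      have h1A : (1 : ℕ) ∉ A := by
        intro h1A
        have : (1 : ℕ) ∈ B + C := by rw [hsum]; exact h1A
        obtain ⟨b, hb, c, hc, hbc⟩ := Finset.mem_add.mp this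
        have := B.le_max' b hb
        have := C.le_max' c hc
        omega
      rcases (hR 1 (by omega) h1A).2 (by omega) with e | e <;> omega
end

section
/- Let d(A) denote the number of sumset divisors of a nonempty finite set A ⊆ ℕ (sets B such that A = B + C for some C ⊆ ℕ). Then for any finite A ⊆ ℕ with r = min(A), d(A) = (r+1) · d(A - r), where A - r = {a - r : a ∈ A}. -/
open Pointwise

/-- The number of sumset divisors of a finite set of naturals. -/
noncomputable def numDivisors (A : Finset ℕ) : ℕ :=
  {B : Finset ℕ | ∃ C : Finset ℕ, A = B + C}.ncard

lemma min'_add_aux (B C : Finset ℕ) (hB : B.Nonempty) (hC : C.Nonempty) :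
    (B + C).min' (hB.add hC) = B.min' hB + C.min' hC := by
  apply le_antisymm
  · exact Finset.min'_le _ _ (Finset.add_mem_add (B.min'_mem hB) (C.min'_mem hC))
  · apply Finset.le_min'
    intro y hy
    obtain ⟨b, hb, c, hc, rfl⟩ := Finset.mem_add.mp hy
    exact add_le_add (Finset.min'_le _ _ hb) (Finset.min'_le _ _ hc)

lemma min'_congr_aux {X Y : Finset ℕ} (h : X = Y) (hX : X.Nonempty) (hY : Y.Nonempty) :
    X.min' hX = Y.min' hY := by subst h; rfl

lemma shift_eq_aux (B : Finset ℕ) (s : ℕ) (h : ∀ b ∈ B, s ≤ b) :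
    (B.image (· - s)) + {s} = B := by
  ext x
  simp only [Finset.mem_add, Finset.mem_image, Finset.mem_singleton]
  constructor
  · rintro ⟨y, ⟨b, hb, rfl⟩, z, hz, rfl⟩
    have := h b hb
    have hxb : b - s + z = b := by omega
    rwa [hxb]
  · intro hx
    exact ⟨x - s, ⟨x, hx, rfl⟩, s, rfl, by have := h x hx; omega⟩

lemma cancel_singleton_aux {X Y : Finset ℕ} (r : ℕ) (h : X + {r} = Y + {r}) : X = Y := by
  rw [Finset.add_singleton, Finset.add_singleton] at h
  exact Finset.image_injective (add_left_injective r) h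

set_option maxHeartbeats 1000000 in
theorem stmt5 (A : Finset ℕ) (hA : A.Nonempty) (r : ℕ) (hr : r = A.min' hA) :
    numDivisors A = (r + 1) * numDivisors (A.image (· - r)) := by
  set A' := A.image (· - r) with hA'def
  have hA'ne : A'.Nonempty := hA.image _
  have hrA : r ∈ A := hr ▸ A.min'_mem hA
  have h0 : (0 : ℕ) ∈ A' := Finset.mem_image.mpr ⟨r, hrA, Nat.sub_self r⟩
  have hminA' : A'.min' hA'ne = 0 :=
    le_antisymm (Finset.min'_le _ _ h0) (Nat.zero_le _)
  have hAeq : A' + {r} = A := shift_eq_aux A r (fun a ha => hr ▸ A.min'_le a ha)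
  -- nonemptiness of factors
  have hfac : ∀ {X B C : Finset ℕ}, X.Nonempty → X = B + C → B.Nonempty ∧ C.Nonempty := by
    intro X B C hX hXeq
    obtain ⟨a, ha⟩ := hX
    rw [hXeq] at ha
    obtain ⟨b, hb, c, hc, _⟩ := Finset.mem_add.mp ha
    exact ⟨⟨b, hb⟩, ⟨c, hc⟩⟩
  -- all divisors of A' have min 0 and are nonempty
  have hdivmin : ∀ B' : Finset ℕ, (∃ C', A' = B' + C') →
      ∃ hB' : B'.Nonempty, B'.min' hB' = 0 := by
    intro B' ⟨C', hC'⟩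
    obtain ⟨hB', hC'ne⟩ := hfac hA'ne hC'
    refine ⟨hB', ?_⟩
    have h1 := min'_add_aux B' C' hB' hC'ne
    have h2 := min'_congr_aux hC' hA'ne (hB'.add hC'ne)
    omega
  -- the bijection
  let D : Set (Finset ℕ) := {B : Finset ℕ | ∃ C, A = B + C}
  let D' : Set (Finset ℕ) := {B : Finset ℕ | ∃ C, A' = B + C}
  have hmem : ∀ (p : Fin (r + 1) × D'), (p.2.1 + {(p.1 : ℕ)}) ∈ D := by
    rintro ⟨s, B', C', hBC⟩
    refine ⟨C' + {r - (s : ℕ)}, ?_⟩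
    have hs : (s : ℕ) ≤ r := Nat.lt_succ_iff.mp s.isLt
    calc A = A' + {r} := hAeq.symm
      _ = (B' + C') + {(s : ℕ) + (r - (s : ℕ))} := by
          rw [← hBC, Nat.add_sub_cancel' hs]
      _ = (B' + C') + ({(s : ℕ)} + {r - (s : ℕ)}) := by
          rw [Finset.singleton_add_singleton]
      _ = (B' + {(s : ℕ)}) + (C' + {r - (s : ℕ)}) := add_add_add_comm _ _ _ _
  let g : Fin (r + 1) × D' → D := fun p => ⟨p.2.1 + {(p.1 : ℕ)}, hmem p⟩
  have hmin_shift : ∀ (B' : Finset ℕ) (hm : ∃ C', A' = B' + C') (s : ℕ),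
      ∃ h : (B' + ({s} : Finset ℕ)).Nonempty, (B' + ({s} : Finset ℕ)).min' h = s := by
    intro B' hm s
    obtain ⟨hB', hmin⟩ := hdivmin B' hm
    refine ⟨hB'.add (Finset.singleton_nonempty s), ?_⟩
    rw [min'_add_aux B' {s} hB' (Finset.singleton_nonempty s), hmin,
      Finset.min'_singleton, zero_add]
  have hginj : Function.Injective g := by
    rintro ⟨s₁, B₁, hB₁⟩ ⟨s₂, B₂, hB₂⟩ heq
    have heq' : B₁ + {(s₁ : ℕ)} = B₂ + {(s₂ : ℕ)} := congrArg Subtype.val heq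
    obtain ⟨h₁, hm₁⟩ := hmin_shift B₁ hB₁ (s₁ : ℕ)
    obtain ⟨h₂, hm₂⟩ := hmin_shift B₂ hB₂ (s₂ : ℕ)
    have hs : (s₁ : ℕ) = (s₂ : ℕ) := by
      rw [← hm₁, ← hm₂]
      congr 1
    have hB : B₁ = B₂ := by
      apply cancel_singleton_aux (s₁ : ℕ)
      rw [heq', hs]
    simp only [Prod.mk.injEq, Subtype.mk.injEq]
    exact ⟨Fin.ext hs, hB⟩
  have hgsurj : Function.Surjective g := by
    rintro ⟨B, C, hBC⟩
    obtain ⟨hBne, hCne⟩ := hfac hA hBC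
    set s := B.min' hBne with hs
    set t := C.min' hCne with ht
    have hst : s + t = r := by
      have h1 := min'_add_aux B C hBne hCne
      have h2 := min'_congr_aux hBC hA (hBne.add hCne)
      omega
    have hsr : s < r + 1 := by omega
    have hBsplit : (B.image (· - s)) + {s} = B :=
      shift_eq_aux B s (fun b hb => Finset.min'_le _ _ hb)
    have hCsplit : (C.image (· - t)) + {t} = C :=
      shift_eq_aux C t (fun c hc => Finset.min'_le _ _ hc)
    have hdiv : A' = (B.image (· - s)) + (C.image (· - t)) := by
      apply cancel_singleton_aux r
      rw [hAeq]
      calc A = B + C := hBC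
        _ = ((B.image (· - s)) + {s}) + ((C.image (· - t)) + {t}) := by
            rw [hBsplit, hCsplit]
        _ = ((B.image (· - s)) + (C.image (· - t))) + ({s} + {t}) :=
            (add_add_add_comm _ _ _ _).symm
        _ = ((B.image (· - s)) + (C.image (· - t))) + {r} := by
            rw [Finset.singleton_add_singleton, hst]
    refine ⟨⟨⟨s, hsr⟩, ⟨B.image (· - s), ⟨_, hdiv⟩⟩⟩, ?_⟩
    apply Subtype.ext
    exact hBsplit
  have hcard : Nat.card (Fin (r + 1) × D') = Nat.card D :=
    Nat.card_eq_of_bijective g ⟨hginj, hgsurj⟩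
  have : numDivisors A = Nat.card D := (Nat.card_coe_set_eq D).symm
  rw [this, ← hcard, Nat.card_prod, Nat.card_eq_fintype_card, Fintype.card_fin,
    Nat.card_coe_set_eq D']
  rfl
end

section
/- The map β from finite subsets of ℕ to binary strings, sending A to the binary number whose i-th digit is 1 iff i ∈ A, satisfies β(A + B) = β(A) ⊗ β(B), where ⊗ is binary lunar multiplication (long multiplication with digitwise max as addition and digitwise min as digit multiplication). -/
open Pointwise

/-- The binary encoding of a finite set of naturals: the `i`-th digit is 1 iff `i ∈ A`. -/
def beta (A : Finset ℕ) : ℕ → ℕ := fun i => if i ∈ A then 1 else 0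

/-- Lunar multiplication of digit sequences: long multiplication where digitwise
addition is `max` and digit multiplication is `min` (no carries). -/
def lunarMul (a b : ℕ → ℕ) : ℕ → ℕ :=
  fun i => (Finset.range (i + 1)).sup fun j => min (a j) (b (i - j))

theorem stmt6 (A B : Finset ℕ) :
    beta (A + B) = lunarMul (beta A) (beta B) := by
  funext i
  simp only [beta, lunarMul]
  by_cases h : i ∈ A + B
  · rw [if_pos h]
    obtain ⟨a, ha, b, hb, rfl⟩ := Finset.mem_add.mp h
    refine le_antisymm ?_ (Finset.sup_le fun j _ => ?_)
    · have hmem : a ∈ Finset.range (a + b + 1) := by simp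
      refine le_trans ?_ (Finset.le_sup hmem)
      simp [ha, Nat.add_sub_cancel_left, hb]
    · exact le_trans (min_le_left _ _) (by split <;> omega)
  · rw [if_neg h]
    symm
    refine Nat.le_zero.mp (Finset.sup_le fun j hj => ?_)
    simp only [Finset.mem_range] at hj
    by_cases hA : j ∈ A
    · by_cases hB : (i - j) ∈ B
      · exact absurd (Finset.add_mem_add hA hB) (by rwa [show j + (i - j) = i by omega])
      · simp [hB]
    · simp [hA]
end

section
/- For any n ∈ ℕ, the number of sumset divisors of the interval {0,1,...,n} equals the number of compositions of n+1 whose first part is greater than or equal to every other part. -/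
open Pointwise

/-- A headstrong composition: a list of positive integers whose first part is
greater than or equal to every part. -/
def IsHeadstrong (n : ℕ) (l : List ℕ) : Prop :=
  l.sum = n ∧ (∀ x ∈ l, 0 < x) ∧ ∀ x ∈ l, x ≤ l.headI

/-- Set of sums of proper suffixes of `l`. -/
def suffixSums : List ℕ → Finset ℕ
  | [] => ∅
  | _ :: t => insert t.sum (suffixSums t)

/-- `diffs s [x₁, x₂, ...] = [s - x₁, x₁ - x₂, ...]`. -/
def diffs : ℕ → List ℕ → List ℕ
  | _, [] => []
  | s, x :: t => (s - x) :: diffs x t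

lemma tail_sum_le (t : List ℕ) : t.tail.sum ≤ t.sum := by
  cases t with
  | nil => simp
  | cons a t => simp [List.sum_cons]

lemma mem_suffixSums_le : ∀ {l : List ℕ} {b : ℕ}, b ∈ suffixSums l → b ≤ l.tail.sum
  | [], b, hb => by simp [suffixSums] at hb
  | a :: t, b, hb => by
      simp only [suffixSums, Finset.mem_insert] at hb
      rcases hb with rfl | hb
      · simp
      · exact le_trans (le_trans (mem_suffixSums_le hb) (tail_sum_le t)) (by simp)

lemma sum_notMem_suffixSums {t : List ℕ} (hpos : ∀ x ∈ t, 0 < x) (ht : t ≠ []) :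
    t.sum ∉ suffixSums t := by
  intro h
  have h1 := mem_suffixSums_le h
  cases t with
  | nil => exact ht rfl
  | cons a u =>
      have : 0 < a := hpos a (by simp)
      simp only [List.tail_cons, List.sum_cons] at h1
      omega

lemma cover {m : ℕ} : ∀ (t : List ℕ), (∀ x ∈ t, 0 < x) → (∀ x ∈ t, x ≤ m) →
    Finset.range t.sum ⊆ suffixSums t + Finset.range m := by
  intro t
  induction t with
  | nil => intro _ _; simp
  | cons b s ih =>
      intro hpos hle y hy
      simp only [Finset.mem_range, List.sum_cons] at hy
      by_cases hc : y < s.sum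
      · have := ih (fun x hx => hpos x (by simp [hx])) (fun x hx => hle x (by simp [hx]))
          (Finset.mem_range.2 hc)
        rw [Finset.mem_add] at this ⊢
        obtain ⟨u, hu, v, hv, huv⟩ := this
        exact ⟨u, by simp [suffixSums, hu], v, hv, huv⟩
      · push_neg at hc
        have hb : b ≤ m := hle b (by simp)
        rw [Finset.mem_add]
        refine ⟨s.sum, by simp [suffixSums], y - s.sum, Finset.mem_range.2 (by omega), by omega⟩

lemma suffixSums_inj : ∀ (l l' : List ℕ), (∀ x ∈ l, 0 < x) → (∀ x ∈ l', 0 < x) →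
    l.sum = l'.sum → suffixSums l = suffixSums l' → l = l' := by
  intro l
  induction l with
  | nil =>
      intro l' _ hpos' hsum _
      cases l' with
      | nil => rfl
      | cons a t =>
          simp only [List.sum_nil, List.sum_cons] at hsum
          have : 0 < a := hpos' a (by simp)
          omega
  | cons a t ih =>
      intro l' hpos hpos' hsum hg
      cases l' with
      | nil =>
          simp only [List.sum_nil, List.sum_cons] at hsum
          have : 0 < a := hpos a (by simp)
          omega
      | cons a' t' =>
          have hts : t.sum = t'.sum := by
            have h1 : t.sum ∈ suffixSums (a' :: t') := by
              rw [← hg]; simp [suffixSums]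
            have h2 : t'.sum ∈ suffixSums (a :: t) := by
              rw [hg]; simp [suffixSums]
            simp only [suffixSums, Finset.mem_insert] at h1 h2
            rcases h1 with h1 | h1
            · exact h1
            · rcases h2 with h2 | h2
              · exact h2.symm
              · have := le_trans (mem_suffixSums_le h1) (tail_sum_le t')
                have := le_trans (mem_suffixSums_le h2) (tail_sum_le t)
                omega
          have ha : a = a' := by
            simp only [List.sum_cons] at hsum; omega
          have htpos : ∀ x ∈ t, 0 < x := fun x hx => hpos x (by simp [hx])
          have ht'pos : ∀ x ∈ t', 0 < x := fun x hx => hpos' x (by simp [hx])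
          have hgt : suffixSums t = suffixSums t' := by
            by_cases h0 : t = []
            · subst h0
              -- t' must be [] too
              cases t' with
              | nil => rfl
              | cons b u =>
                  have : 0 < b := ht'pos b (by simp)
                  simp only [List.sum_nil, List.sum_cons] at hts
                  omega
            · by_cases h0' : t' = []
              · subst h0'
                cases t with
                | nil => rfl
                | cons b u =>
                    have : 0 < b := htpos b (by simp)
                    simp only [List.sum_nil, List.sum_cons] at hts
                    omega
              · have k1 := sum_notMem_suffixSums htpos h0
                have k2 := sum_notMem_suffixSums ht'pos h0'
                simp only [suffixSums] at hg
                rw [← hts] at hg k2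
                have := congrArg (fun s => Finset.erase s t.sum) hg
                simpa [Finset.erase_insert, k1, k2] using this
          rw [ha, ih t' htpos ht'pos hts hgt]

lemma chain_cons' {R : ℕ → ℕ → Prop} {a b : ℕ} {l : List ℕ} :
    List.Chain R a (b :: l) ↔ R a b ∧ List.Chain R b l := List.isChain_cons_cons

lemma chain_gt {a : ℕ} : ∀ {l : List ℕ}, List.Chain (· > ·) a l → ∀ b ∈ l, b < a := by
  intro l
  induction l generalizing a with
  | nil => intro _ b hb; simp at hb
  | cons x t ih =>
      intro h b hb
      rw [chain_cons'] at h
      rcases hb with _ | hb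
      · exact h.1
      · exact lt_trans (ih h.2 b (by assumption)) h.1

lemma diffs_sum : ∀ (xs : List ℕ) (s : ℕ), List.Chain (· > ·) s xs →
    (diffs s xs).sum + xs.getLastD s = s := by
  intro xs
  induction xs with
  | nil => intro s _; simp [diffs]
  | cons x t ih =>
      intro s h
      rw [chain_cons'] at h
      have := ih x h.2
      simp only [diffs, List.sum_cons, List.getLastD_cons]
      omega

lemma diffs_pos : ∀ (xs : List ℕ) (s : ℕ), List.Chain (· > ·) s xs →
    ∀ p ∈ diffs s xs, 0 < p := by
  intro xs
  induction xs with
  | nil => intro s _ p hp; simp [diffs] at hp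
  | cons x t ih =>
      intro s h p hp
      rw [chain_cons'] at h
      simp only [diffs, List.mem_cons] at hp
      rcases hp with rfl | hp
      · omega
      · exact ih x h.2 p hp

lemma suffixSums_diffs : ∀ (xs : List ℕ) (s : ℕ), List.Chain (· > ·) s xs →
    xs.getLastD 0 = 0 → suffixSums (diffs s xs) = xs.toFinset := by
  intro xs
  induction xs with
  | nil => intro s _ _; simp [diffs, suffixSums]
  | cons x t ih =>
      intro s h hlast
      rw [chain_cons'] at h
      rw [List.getLastD_cons] at hlast
      cases t with
      | nil =>
          have hx0 : x = 0 := by simpa using hlast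
          subst hx0
          simp [diffs, suffixSums]
      | cons c u =>
          rw [List.getLastD_cons] at hlast
          have hs := diffs_sum (c :: u) x h.2
          rw [List.getLastD_cons] at hs
          rw [hlast] at hs
          have hsum' : (diffs x (c :: u)).sum = x := by omega
          have hrec := ih x h.2 (by rw [List.getLastD_cons]; exact hlast)
          show insert (diffs x (c :: u)).sum (suffixSums (diffs x (c :: u)))
              = (x :: c :: u).toFinset
          rw [hsum', hrec]
          simp [List.toFinset_cons]

lemma diffs_le {B C : Finset ℕ} {n K : ℕ} (hBC : Finset.range (n + 1) = B + C)
    (hC : ∀ c ∈ C, c < K) :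
    ∀ (t : List ℕ) (x : ℕ), x ≤ n + 1 → List.Chain (· > ·) x t →
      (∀ r ∈ B, r < x → r ∈ t) → ∀ p ∈ diffs x t, p ≤ K := by
  intro t
  induction t with
  | nil => intro x _ _ _ p hp; simp [diffs] at hp
  | cons v t' ih =>
      intro x hx h hinv p hp
      rw [chain_cons'] at h
      simp only [diffs, List.mem_cons] at hp
      rcases hp with rfl | hp
      · by_contra hcon
        push_neg at hcon
        have hy : v + K < x := by omega
        have hymem : v + K ∈ Finset.range (n + 1) := Finset.mem_range.2 (by omega)
        rw [hBC, Finset.mem_add] at hymem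
        obtain ⟨b, hb, c, hc, hbc⟩ := hymem
        have hcK := hC c hc
        have hbv : v < b := by omega
        have hbx : b < x := by omega
        have := hinv b hb hbx
        rw [List.mem_cons] at this
        rcases this with h1 | h1
        · omega
        · exact absurd (chain_gt h.2 b h1) (by omega)
      · exact ih v (by omega) h.2
          (fun r hr hrv => by
            have := hinv r hr (lt_trans hrv h.1)
            rw [List.mem_cons] at this
            rcases this with h1 | h1
            · omega
            · exact h1) p hp

lemma getLastD_le_chain : ∀ (t : List ℕ) (a : ℕ), List.Chain (· > ·) a t → t.getLastD a ≤ a := by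
  intro t
  induction t with
  | nil => intro a _; simp
  | cons v t' ih =>
      intro a h
      rw [chain_cons'] at h
      rw [List.getLastD_cons]
      exact le_trans (ih v h.2) (le_of_lt h.1)

lemma getLastD_le_mem : ∀ (t : List ℕ) (a : ℕ), List.Chain (· > ·) a t →
    ∀ r ∈ t, t.getLastD a ≤ r := by
  intro t
  induction t with
  | nil => intro a _ r hr; simp at hr
  | cons v t' ih =>
      intro a h r hr
      rw [chain_cons'] at h
      rw [List.getLastD_cons]
      rcases hr with _ | hr
      · exact getLastD_le_chain t' v h.2
      · exact ih v h.2 r (by assumption)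

theorem stmt7 (n : ℕ) :
    {B : Finset ℕ | ∃ C : Finset ℕ, Finset.range (n + 1) = B + C}.ncard =
      {l : List ℕ | IsHeadstrong (n + 1) l}.ncard := by
  have himg : {B : Finset ℕ | ∃ C : Finset ℕ, Finset.range (n + 1) = B + C}
      = suffixSums '' {l : List ℕ | IsHeadstrong (n + 1) l} := by
    ext B
    simp only [Set.mem_setOf_eq, Set.mem_image]
    constructor
    · rintro ⟨C, hBC⟩
      -- basic facts
      have h0 : (0 : ℕ) ∈ Finset.range (n + 1) := Finset.mem_range.2 (by omega)
      rw [hBC, Finset.mem_add] at h0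
      obtain ⟨b0, hb0, c0, hc0, hbc0⟩ := h0
      have hb00 : b0 = 0 := by omega
      have hc00 : c0 = 0 := by omega
      subst hb00; subst hc00
      have hmem_le : ∀ b ∈ B, ∀ c ∈ C, b + c ≤ n := by
        intro b hb c hc
        have : b + c ∈ Finset.range (n + 1) := by
          rw [hBC]; exact Finset.add_mem_add hb hc
        simpa using Nat.lt_succ_iff.mp (Finset.mem_range.1 this)
      have hBle : ∀ b ∈ B, b ≤ n := fun b hb => by
        simpa using hmem_le b hb 0 hc0
      -- sorted list
      set ys := B.sort (· ≤ ·) with hys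
      set xs := ys.reverse with hxs
      have hxsfin : xs.toFinset = B := by
        rw [hxs, List.toFinset_reverse, hys, Finset.sort_toFinset]
      have hpw : xs.Pairwise (· > ·) := by
        rw [hxs]
        rw [List.pairwise_reverse]
        exact List.sortedLT_iff_pairwise.1 B.sortedLT_sort
      have hchain' : xs.Chain' (· > ·) := List.isChain_iff_pairwise.2 hpw
      have hxsne : xs ≠ [] := by
        intro h
        have : (0 : ℕ) ∈ xs.toFinset := hxsfin ▸ hb0
        rw [h] at this; simp at this
      obtain ⟨x, t, hxt⟩ := List.exists_cons_of_ne_nil hxsne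
      have hxB : x ∈ B := by
        rw [← hxsfin, hxt]; simp
      have hchain : List.Chain (· > ·) (n + 1) xs := by
        rw [hxt, chain_cons']
        constructor
        · have := hBle x hxB; omega
        · rw [hxt] at hchain'; exact hchain'
      have hlast : xs.getLastD 0 = 0 := by
        have h0xs : (0 : ℕ) ∈ xs := by
          rw [← List.mem_toFinset, hxsfin]; exact hb0
        rw [hxt] at h0xs hchain ⊢
        rw [chain_cons'] at hchain
        rw [List.getLastD_cons]
        rw [List.mem_cons] at h0xs
        rcases h0xs with h1 | h1
        · -- x = 0, so t = [] by chain
          cases t with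
          | nil => simp [← h1]
          | cons c u =>
              have := chain_gt hchain.2 c (by simp)
              omega
        · have := getLastD_le_mem t x hchain.2 0 h1
          omega
      refine ⟨diffs (n + 1) xs, ⟨?_, ?_, ?_⟩, ?_⟩
      · -- sum
        have := diffs_sum xs (n + 1) hchain
        have hl2 : xs.getLastD (n+1) = 0 := by
          rw [hxt] at hlast ⊢
          rw [List.getLastD_cons] at hlast ⊢
          exact hlast
        omega
      · exact diffs_pos xs (n + 1) hchain
      · -- headstrong
        intro p hp
        rw [hxt] at hp hchain ⊢
        rw [chain_cons'] at hchain
        simp only [diffs, List.headI, List.mem_cons] at hp ⊢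
        rcases hp with rfl | hp
        · exact le_rfl
        · -- p ∈ diffs x t, bound by K = n + 1 - x
          have hCbound : ∀ c ∈ C, c < n + 1 - x := by
            intro c hc
            have := hmem_le x hxB c hc
            have := hBle x hxB
            omega
          have hinv : ∀ r ∈ B, r < x → r ∈ t := by
            intro r hr hrx
            have : r ∈ xs := by rw [← List.mem_toFinset, hxsfin]; exact hr
            rw [hxt, List.mem_cons] at this
            rcases this with h1 | h1
            · omega
            · exact h1
          exact diffs_le hBC hCbound t x (by have := hBle x hxB; omega) hchain.2 hinv p hp
      · exact (suffixSums_diffs xs (n + 1) hchain hlast).trans hxsfin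
    · rintro ⟨l, ⟨hsum, hpos, hhead⟩, rfl⟩
      refine ⟨Finset.range l.headI, ?_⟩
      have hlne : l ≠ [] := by
        intro h; rw [h] at hsum; simp at hsum
      obtain ⟨a, t, rfl⟩ := List.exists_cons_of_ne_nil hlne
      apply Finset.Subset.antisymm
      · have := cover (a :: t) hpos hhead
        rw [hsum] at this
        exact this
      · intro y hy
        rw [Finset.mem_add] at hy
        obtain ⟨b, hb, c, hc, hbc⟩ := hy
        have h1 := mem_suffixSums_le hb
        have h2 := Finset.mem_range.1 hc
        simp only [List.tail_cons] at h1
        simp only [List.headI] at h2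
        simp only [List.sum_cons] at hsum
        have ha : 0 < a := hpos a (by simp)
        exact Finset.mem_range.2 (by omega)
  rw [himg, Set.ncard_image_of_injOn]
  intro l hl l' hl' h
  exact suffixSums_inj l l' hl.2.1 hl'.2.1 (by rw [hl.1, hl'.1]) h
end

section
/- For any n ∈ ℕ and m ≥ 1, the number of sumset divisors of {0,1,...,n} of cardinality exactly m equals the number of headstrong compositions of n+1 with exactly m parts. -/
open Pointwise

/-- suffix sums -/
def sfx (l : List ℕ) (k : ℕ) : ℕ := (l.drop k).sum

lemma sfx_zero (l : List ℕ) : sfx l 0 = l.sum := rfl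

lemma sfx_len (l : List ℕ) : sfx l l.length = 0 := by simp [sfx]

lemma sfx_rec (l : List ℕ) {k : ℕ} (hk : k < l.length) :
    sfx l k = l.getD k 0 + sfx l (k + 1) := by
  rw [sfx, sfx, List.drop_eq_getElem_cons hk, List.sum_cons, List.getD_eq_getElem _ _ hk]

lemma sfx_anti (l : List ℕ) {a b : ℕ} (h : a ≤ b) : sfx l b ≤ sfx l a := by
  have : l.drop b = (l.drop a).drop (b - a) := by
    rw [List.drop_drop]; congr 1; omega
  rw [sfx, sfx, this]
  have := List.sum_take_add_sum_drop (l.drop a) (b - a)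
  omega

lemma sfx_strict_anti (l : List ℕ) (hpos : ∀ x ∈ l, 0 < x) {a b : ℕ}
    (h : a < b) (hb : a < l.length) : sfx l b < sfx l a := by
  have h1 : sfx l b ≤ sfx l (a + 1) := sfx_anti l h
  have h2 := sfx_rec l hb
  have : 0 < l.getD a 0 := by
    apply hpos
    rw [List.getD_eq_getElem _ _ hb]
    exact List.getElem_mem _
  omega

lemma lastD_le (r : List ℕ) : ∀ (a : ℕ), List.Chain (· ≥ ·) a r → r.getLastD a ≤ a := by
  induction r with
  | nil => intro a _; simp
  | cons b t ih =>
    intro a h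
    replace h := List.isChain_cons_cons.1 h
    rw [List.getLastD_cons]
    exact le_trans (ih b h.2) h.1

lemma tele (r : List ℕ) : ∀ (a : ℕ), List.Chain (· ≥ ·) a r →
    (List.zipWith (· - ·) (a :: r) r).sum = a - r.getLastD a := by
  induction r with
  | nil => intro a _; simp
  | cons b t ih =>
    intro a h
    replace h := List.isChain_cons_cons.1 h
    have hlast := lastD_le t b h.2
    rw [List.zipWith_cons_cons, List.sum_cons, ih b h.2, List.getLastD_cons]
    omega

lemma getLastD_drop {s : List ℕ} {k : ℕ} (hk : k < s.length) (d d' : ℕ) :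
    (s.drop k).getLastD d = s.getLastD d' := by
  rw [List.getLastD_eq_getLast?, List.getLastD_eq_getLast?, List.getLast?_drop,
    if_neg (by omega)]
  have hne : s ≠ [] := by rintro rfl; simp at hk
  rw [List.getLast?_eq_getLast hne]
  rfl

lemma sfx_zip (s : List ℕ) (hs : List.Pairwise (· ≥ ·) s) {k : ℕ} (hk : k < s.length) :
    sfx (List.zipWith (· - ·) s s.tail) k = s.getD k 0 - s.getLastD 0 := by
  rw [sfx, List.drop_zipWith, List.drop_tail]
  have hdk : s.drop k = s[k] :: s.drop (k + 1) := List.drop_eq_getElem_cons hk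
  have hchain : List.Chain (· ≥ ·) s[k] (s.drop (k + 1)) := by
    show List.IsChain _ (s[k] :: s.drop (k + 1))
    rw [List.isChain_iff_pairwise, ← hdk]
    exact List.Pairwise.sublist (List.drop_sublist k s) hs
  rw [hdk]
  have := tele (s.drop (k + 1)) s[k] hchain
  rw [show List.zipWith (· - ·) (s[k] :: s.drop (k+1)) (s.drop (k+1)) =
    List.zipWith (fun a b => a - b) (s[k] :: s.drop (k+1)) (s.drop (k+1)) from rfl] at this ⊢
  rw [this, List.getD_eq_getElem _ _ hk]
  congr 1
  by_cases h : k + 1 < s.length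
  · exact getLastD_drop h _ _
  · have : s.drop (k + 1) = [] := by simp; omega
    rw [this]
    simp only [List.getLastD_nil]
    rw [List.getLastD_eq_getLast?, List.getLast?_eq_getLast (by rintro rfl; simp at hk),
      Option.getD_some]
    have : s.length - 1 = k := by omega
    rw [List.getLast_eq_getElem]
    simp [this]

def fB (l : List ℕ) : Finset ℕ := (Finset.range l.length).image fun k => sfx l (k + 1)

def gL (n : ℕ) (B : Finset ℕ) : List ℕ :=
  List.zipWith (· - ·) ((n + 1) :: (B.sort (· ≤ ·)).reverse) ((B.sort (· ≤ ·)).reverse)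

lemma image_getD (r : List ℕ) :
    (Finset.range r.length).image (fun k => r.getD k 0) = r.toFinset := by
  ext x
  simp only [Finset.mem_image, Finset.mem_range, List.mem_toFinset]
  constructor
  · rintro ⟨k, hk, rfl⟩
    rw [List.getD_eq_getElem _ _ hk]
    exact List.getElem_mem _
  · intro hx
    obtain ⟨k, hk, rfl⟩ := List.mem_iff_getElem.1 hx
    exact ⟨k, hk, (List.getD_eq_getElem _ _ hk)⟩

lemma headI_eq_getD {l : List ℕ} (h : l ≠ []) : l.headI = l.getD 0 0 := by
  cases l with
  | nil => simp at h
  | cons a t => rfl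

lemma card_fB {l : List ℕ} (hpos : ∀ x ∈ l, 0 < x) : (fB l).card = l.length := by
  rw [fB, Finset.card_image_of_injOn, Finset.card_range]
  intro a ha b hb hab
  simp only [Finset.coe_range, Set.mem_Iio] at ha hb
  dsimp only at hab
  by_contra hne
  rcases Nat.lt_or_ge a b with h | h
  · have := sfx_strict_anti l hpos (by omega : a + 1 < b + 1) (by omega) 
    omega
  · have hba : b < a := by omega
    have := sfx_strict_anti l hpos (by omega : b + 1 < a + 1) (by omega)
    omega

lemma decomp {n : ℕ} {l : List ℕ} (hh : IsHeadstrong (n + 1) l) :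
    Finset.range (n + 1) = fB l + Finset.range l.headI := by
  obtain ⟨hsum, hpos, hle⟩ := hh
  have hne : l ≠ [] := by rintro rfl; simp at hsum
  have hlen : 0 < l.length := List.length_pos_iff.2 hne
  have hhead : l.headI = l.getD 0 0 := headI_eq_getD hne
  have hs1 : sfx l 0 = l.headI + sfx l 1 := by rw [hhead]; exact sfx_rec l hlen
  ext x
  simp only [Finset.mem_range, Finset.mem_add, fB, Finset.mem_image]
  constructor
  · intro hx
    set P : ℕ → Prop := fun k => x < sfx l k with hP
    have hP0 : P 0 := by rw [hP]; simpa [sfx_zero, hsum] using hx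
    set K := Nat.findGreatest P l.length with hK
    have hPK : P K := Nat.findGreatest_spec (Nat.zero_le _) hP0
    have hKle : K ≤ l.length := Nat.findGreatest_le _
    have hKlt : K < l.length := by
      rcases Nat.lt_or_ge K l.length with h | h
      · exact h
      · exfalso
        have : K = l.length := by omega
        rw [hP, this, sfx_len] at hPK
        omega
    have hnP : ¬ P (K + 1) := Nat.findGreatest_is_greatest (n := l.length) (k := K + 1) (by omega) (by omega)
    rw [hP] at hPK hnP
    push_neg at hnP
    have hrec := sfx_rec l hKlt
    have hmem : l.getD K 0 ∈ l := by
      rw [List.getD_eq_getElem _ _ hKlt]; exact List.getElem_mem _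
    have hKd : l.getD K 0 ≤ l.headI := hle _ hmem
    refine ⟨sfx l (K + 1), ⟨K, hKlt, rfl⟩, x - sfx l (K + 1), by omega, by omega⟩
  · rintro ⟨b, ⟨k, hk, rfl⟩, c, hc, rfl⟩
    have h1 : sfx l (k + 1) ≤ sfx l 1 := sfx_anti l (by omega)
    have h0 : sfx l 0 = n + 1 := by rw [sfx_zero, hsum]
    omega

lemma cover_s8 {n : ℕ} {B C : Finset ℕ} (h : Finset.range (n + 1) = B + C) {M : ℕ}
    (hMB : M ∈ B) (_hM : ∀ b ∈ B, b ≤ M) :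
    M ≤ n ∧ ∀ x, x ≤ n → ∃ b ∈ B, b ≤ x ∧ x < b + (n + 1 - M) := by
  have hbc : ∀ b ∈ B, ∀ c ∈ C, b + c ≤ n := by
    intro b hb c hc
    have : b + c ∈ Finset.range (n + 1) := by
      rw [h, Finset.mem_add]; exact ⟨b, hb, c, hc, rfl⟩
    simpa using Nat.lt_succ_iff.1 (Finset.mem_range.1 this)
  have hn : n ∈ Finset.range (n + 1) := by simp
  rw [h, Finset.mem_add] at hn
  obtain ⟨b₀, hb₀, c₀, hc₀, hbc₀⟩ := hn
  have hMn : M ≤ n := by have := hbc M hMB c₀ hc₀; omega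
  have hcbound : ∀ c ∈ C, c ≤ n - M := by
    intro c hc; have := hbc M hMB c hc; omega
  refine ⟨hMn, fun x hx => ?_⟩
  have hxmem : x ∈ Finset.range (n + 1) := by simp; omega
  rw [h, Finset.mem_add] at hxmem
  obtain ⟨b, hb, c, hc, rfl⟩ := hxmem
  have := hcbound c hc
  exact ⟨b, hb, by omega, by omega⟩

lemma sorted_getD_lt {r : List ℕ} (hr : List.Pairwise (· > ·) r) {i j : ℕ}
    (hij : i < j) (hj : j < r.length) : r.getD j 0 < r.getD i 0 := by
  rw [List.getD_eq_getElem _ _ hj, List.getD_eq_getElem _ _ (by omega)]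
  exact List.pairwise_iff_getElem.1 hr i j (by omega) hj hij

lemma sorted_getD_le {r : List ℕ} (hr : List.Pairwise (· > ·) r) {i j : ℕ}
    (hij : i ≤ j) (hj : j < r.length) : r.getD j 0 ≤ r.getD i 0 := by
  rcases Nat.eq_or_lt_of_le hij with rfl | h
  · exact le_refl _
  · exact le_of_lt (sorted_getD_lt hr h hj)

lemma getLastD_eq_getD {r : List ℕ} (h : r ≠ []) (d : ℕ) :
    r.getLastD d = r.getD (r.length - 1) 0 := by
  have hlt : r.length - 1 < r.length := by
    have := List.length_pos_iff.2 h; omega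
  rw [List.getLastD_eq_getLast?, List.getLast?_eq_getLast h, Option.getD_some,
    List.getLast_eq_getElem, List.getD_eq_getElem _ _ hlt]

lemma gL_spec {n : ℕ} {B C : Finset ℕ} (hB : B.Nonempty)
    (h : Finset.range (n + 1) = B + C) :
    IsHeadstrong (n + 1) (gL n B) ∧ (gL n B).length = B.card ∧ fB (gL n B) = B := by
  set r := (B.sort (· ≤ ·)).reverse with hr
  have hrlen : r.length = B.card := by rw [hr, List.length_reverse, Finset.length_sort]
  have hrmem : ∀ b : ℕ, b ∈ r ↔ b ∈ B := by
    intro b; rw [hr, List.mem_reverse, Finset.mem_sort]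
  have hrsorted : List.Pairwise (· > ·) r := by
    rw [hr]
    exact List.pairwise_reverse.2 (Finset.sortedLT_sort B).pairwise
  have hrne : r ≠ [] := by
    intro hemp
    rw [← Finset.card_pos, ← hrlen, hemp] at hB
    simp at hB
  have hrpos : 0 < r.length := List.length_pos_iff.2 hrne
  set M := r.getD 0 0 with hMdef
  have hM_mem : M ∈ B := by
    rw [← hrmem, hMdef, List.getD_eq_getElem _ _ hrpos]
    exact List.getElem_mem _
  have hM_max : ∀ b ∈ B, b ≤ M := by
    intro b hb
    obtain ⟨j, hj, rfl⟩ := List.mem_iff_getElem.1 ((hrmem b).2 hb)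
    rw [← List.getD_eq_getElem _ 0 hj]
    exact sorted_getD_le hrsorted (Nat.zero_le _) hj
  obtain ⟨hMn, hcov⟩ := cover_s8 h hM_mem hM_max
  have h0B : 0 ∈ B := by
    obtain ⟨b, hb, hb0, _⟩ := hcov 0 (Nat.zero_le _)
    have : b = 0 := by omega
    rwa [this] at hb
  have hlast0 : r.getD (r.length - 1) 0 = 0 := by
    obtain ⟨j, hj, hj0⟩ := List.mem_iff_getElem.1 ((hrmem 0).2 h0B)
    have h1 : r.getD (r.length - 1) 0 ≤ r.getD j 0 := sorted_getD_le hrsorted (by omega) (by omega)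
    rw [List.getD_eq_getElem _ _ hj, hj0] at h1
    omega
  set s : List ℕ := (n + 1) :: r with hs
  have hssorted : List.Pairwise (· ≥ ·) s := by
    rw [hs, List.pairwise_cons]
    constructor
    · intro b hb
      have := hM_max b ((hrmem b).1 hb)
      omega
    · exact hrsorted.imp (fun {a b} hab => le_of_lt hab)
  have hstail : s.tail = r := rfl
  have hslen : s.length = r.length + 1 := by rw [hs]; rfl
  have hgl : gL n B = List.zipWith (· - ·) s s.tail := rfl
  have hlen : (gL n B).length = r.length := by
    rw [hgl, List.length_zipWith, hstail, hslen]
    omega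
  have hlastD : s.getLastD 0 = 0 := by
    rw [hs, List.getLastD_cons, getLastD_eq_getD hrne, hlast0]
  -- suffix sums
  have hsfx : ∀ k, k < r.length → sfx (gL n B) (k + 1) = r.getD k 0 := by
    intro k hk
    rw [hgl, sfx_zip s hssorted (by omega), hlastD]
    have : s.getD (k + 1) 0 = r.getD k 0 := by rw [hs]; rfl
    rw [this]
    omega
  have hsum : (gL n B).sum = n + 1 := by
    have := sfx_zip s hssorted (k := 0) (by omega)
    rw [← hgl] at this
    rw [← sfx_zero, this, hlastD]
    have : s.getD 0 0 = n + 1 := by rw [hs]; rfl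
    omega
  -- elements
  have hget : ∀ i (hi : i < (gL n B).length), (gL n B)[i] = s.getD i 0 - r.getD i 0 := by
    intro i hi
    have hi' : i < r.length := by rwa [hlen] at hi
    simp only [hgl, List.getElem_zipWith, hstail]
    rw [List.getD_eq_getElem _ _ (by omega : i < s.length), List.getD_eq_getElem _ _ hi']
  have hhead : (gL n B).headI = n + 1 - M := by
    rw [headI_eq_getD (by rw [← List.length_pos_iff, hlen]; omega),
      List.getD_eq_getElem _ _ (by rw [hlen]; omega : 0 < (gL n B).length),
      hget 0 (by rw [hlen]; omega)]
    rw [hs, hMdef]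
    rfl
  have hparts : ∀ x ∈ gL n B, 0 < x ∧ x ≤ n + 1 - M := by
    intro x hx
    obtain ⟨i, hi, rfl⟩ := List.mem_iff_getElem.1 hx
    rw [hget i hi]
    have hi' : i < r.length := by rwa [hlen] at hi
    cases i with
    | zero =>
      have : s.getD 0 0 = n + 1 := by rw [hs]; rfl
      rw [this, ← hMdef]
      omega
    | succ j =>
      have hsj : s.getD (j + 1) 0 = r.getD j 0 := by rw [hs]; rfl
      rw [hsj]
      have hlt : r.getD (j + 1) 0 < r.getD j 0 := sorted_getD_lt hrsorted (by omega) hi'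
      have hjM : r.getD j 0 ≤ M := sorted_getD_le hrsorted (Nat.zero_le _) (by omega)
      constructor
      · omega
      · -- gap bound via covering
        obtain ⟨b, hb, hbx, hxb⟩ := hcov (r.getD j 0 - 1) (by omega)
        obtain ⟨t, ht, rfl⟩ := List.mem_iff_getElem.1 ((hrmem b).2 hb)
        rw [← List.getD_eq_getElem _ 0 ht] at hbx hxb
        have htj : j < t := by
          by_contra hc
          have := sorted_getD_le hrsorted (by omega : t ≤ j) (by omega : j < r.length)
          omega
        have := sorted_getD_le hrsorted (by omega : j + 1 ≤ t) ht
        omega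
  refine ⟨⟨hsum, fun x hx => (hparts x hx).1, fun x hx => ?_⟩, by rw [hlen, hrlen], ?_⟩
  · rw [hhead]; exact (hparts x hx).2
  · -- fB (gL n B) = B
    rw [fB, hlen]
    have : ((Finset.range r.length).image fun k => sfx (gL n B) (k + 1)) =
        (Finset.range r.length).image fun k => r.getD k 0 := by
      apply Finset.image_congr
      intro k hk
      simp only [Finset.coe_range, Set.mem_Iio] at hk
      exact hsfx k hk
    rw [this, image_getD]
    ext b
    rw [List.mem_toFinset]
    exact hrmem b

lemma gL_fB {n : ℕ} {l : List ℕ} (hh : IsHeadstrong (n + 1) l) : gL n (fB l) = l := by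
  obtain ⟨hsum, hpos, hle⟩ := hh
  set msl := List.map (fun k => sfx l (k + 1)) (List.range l.length) with hmsl
  have hmlen : msl.length = l.length := by rw [hmsl, List.length_map, List.length_range]
  have hmget : ∀ i (hi : i < msl.length), msl[i] = sfx l (i + 1) := by
    intro i hi
    simp only [hmsl, List.getElem_map, List.getElem_range]
  have hmsorted : List.Pairwise (· > ·) msl := by
    refine List.pairwise_iff_getElem.mpr ?_
    intro i j hi hj hij
    rw [hmget i hi, hmget j hj]
    exact sfx_strict_anti l hpos (by omega) (by omega)
  have hmnodup : msl.Nodup := hmsorted.imp (fun {a b} hab => ne_of_gt hab)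
  have hfin : fB l = msl.toFinset := by
    rw [fB, hmsl]
    ext x
    simp
  have hsort : (fB l).sort (· ≤ ·) = msl.reverse := by
    rw [hfin, ← List.toFinset_reverse]
    refine (List.toFinset_sort (r := (· ≤ ·)) (List.nodup_reverse.2 hmnodup)).2 ?_
    exact List.pairwise_reverse.2 (hmsorted.imp fun {a b} hab => le_of_lt hab)
  have hrev : ((fB l).sort (· ≤ ·)).reverse = msl := by
    rw [hsort, List.reverse_reverse]
  rw [gL, hrev]
  apply List.ext_getElem
  · rw [List.length_zipWith, List.length_cons, hmlen]
    omega
  · intro i h1 h2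
    rw [List.getElem_zipWith]
    have hi : i < l.length := h2
    have him : i < msl.length := by omega
    rw [hmget i him]
    have hcons : ((n + 1) :: msl)[i]'(by simp; omega) = sfx l i := by
      cases i with
      | zero => rw [List.getElem_cons_zero, ← hsum, sfx_zero]
      | succ j =>
        rw [List.getElem_cons_succ, hmget j (by omega)]
    rw [hcons]
    have := sfx_rec l hi
    rw [List.getD_eq_getElem _ _ hi] at this
    omega

theorem stmt8 (n m : ℕ) (hm : 1 ≤ m) :
    {B : Finset ℕ | B.card = m ∧ ∃ C : Finset ℕ, Finset.range (n + 1) = B + C}.ncard =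
      {l : List ℕ | IsHeadstrong (n + 1) l ∧ l.length = m}.ncard := by
  have hEq : {B : Finset ℕ | B.card = m ∧ ∃ C : Finset ℕ, Finset.range (n + 1) = B + C} =
      fB '' {l : List ℕ | IsHeadstrong (n + 1) l ∧ l.length = m} := by
    ext B
    simp only [Set.mem_setOf_eq, Set.mem_image]
    constructor
    · rintro ⟨hcard, C, hC⟩
      have hBne : B.Nonempty := Finset.card_pos.1 (by omega)
      obtain ⟨hhs, hlen, hfb⟩ := gL_spec hBne hC
      exact ⟨gL n B, ⟨hhs, by rw [hlen, hcard]⟩, hfb⟩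
    · rintro ⟨l, ⟨hhs, hlen⟩, rfl⟩
      exact ⟨by rw [card_fB hhs.2.1, hlen], Finset.range l.headI, decomp hhs⟩
  rw [hEq, Set.ncard_image_of_injOn]
  intro l1 h1 l2 h2 hf
  rw [← gL_fB h1.1, ← gL_fB h2.1, hf]
end

section
/- With F(n,k) the generalized Fibonacci numbers (F(n,k)=0 for 1≤k<n, F(n,n)=1, F(n,k)=Σ_{j=1}^n F(n,k-j) for k>n): for any n > 1 and k > n, 3·F(n,k) ≤ 2·F(n,k+1), with equality if and only if n = 2 and k = 4. -/
theorem stmt10 (F : ℕ → ℕ → ℕ)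
    (h0 : ∀ n k, 1 ≤ k → k < n → F n k = 0)
    (h1 : ∀ n, F n n = 1)
    (hrec : ∀ n k, n < k → F n k = ∑ j ∈ Finset.Icc 1 n, F n (k - j)) :
    ∀ n k, 1 < n → n < k →
      3 * F n k ≤ 2 * F n (k + 1) ∧
        (3 * F n k = 2 * F n (k + 1) ↔ n = 2 ∧ k = 4) := by
  -- positivity
  have hpos : ∀ n, 1 ≤ n → ∀ k, n ≤ k → 1 ≤ F n k := by
    intro n hn k
    induction k using Nat.strong_induction_on with
    | _ k ih =>
      intro hk
      rcases eq_or_lt_of_le hk with h | h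
      · rw [← h, h1]
      · rw [hrec n k h]
        calc 1 ≤ F n (k - 1) := ih (k - 1) (by omega) (by omega)
          _ ≤ ∑ j ∈ Finset.Icc 1 n, F n (k - j) :=
            Finset.single_le_sum (f := fun j => F n (k - j))
              (fun i _ => Nat.zero_le _) (Finset.mem_Icc.mpr ⟨le_refl 1, hn⟩)
  -- monotone step
  have hstep : ∀ n, 1 ≤ n → ∀ m, n ≤ m → F n m ≤ F n (m + 1) := by
    intro n hn m hm
    rw [hrec n (m + 1) (by omega)]
    calc F n m = F n (m + 1 - 1) := by norm_num
      _ ≤ ∑ j ∈ Finset.Icc 1 n, F n (m + 1 - j) :=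
        Finset.single_le_sum (f := fun j => F n (m + 1 - j))
          (fun i _ => Nat.zero_le _) (Finset.mem_Icc.mpr ⟨le_refl 1, hn⟩)
  have hmono : ∀ n, 1 ≤ n → ∀ a b, n ≤ a → a ≤ b → F n a ≤ F n b := by
    intro n hn a b ha hab
    induction b, hab using Nat.le_induction with
    | base => exact le_refl _
    | succ b hb ih => exact ih.trans (hstep n hn b (le_trans ha hb))
  -- pair lower bounds
  have hpair : ∀ n, 2 ≤ n → ∀ m, n < m → ∀ i j : ℕ, 1 ≤ i → i < j → j ≤ n →
      F n (m - i) + F n (m - j) ≤ F n m := by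
    intro n hn m hm i j hi hij hj
    rw [hrec n m hm]
    have hsub : ({i, j} : Finset ℕ) ⊆ Finset.Icc 1 n := by
      intro x hx
      simp only [Finset.mem_insert, Finset.mem_singleton] at hx
      simp only [Finset.mem_Icc]
      omega
    calc F n (m - i) + F n (m - j)
        = ∑ x ∈ ({i, j} : Finset ℕ), F n (m - x) := by
          rw [Finset.sum_pair (by omega : i ≠ j)]
      _ ≤ ∑ x ∈ Finset.Icc 1 n, F n (m - x) :=
          Finset.sum_le_sum_of_subset hsub
  -- strict step
  have hstrict : ∀ n, 2 ≤ n → ∀ m, n + 1 ≤ m → F n m + 1 ≤ F n (m + 1) := by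
    intro n hn m hm
    have h2 := hpair n hn (m + 1) (by omega) 1 2 le_rfl (by omega) hn
    have h3 : 1 ≤ F n (m + 1 - 2) := hpos n (by omega) (m + 1 - 2) (by omega)
    have : m + 1 - 1 = m := by omega
    rw [this] at h2
    omega
  -- key identity
  have key : ∀ n, 1 ≤ n → ∀ k, n < k → F n (k + 1) + F n (k - n) = 2 * F n k := by
    intro n hn k hk
    obtain ⟨m, rfl⟩ : ∃ m, n = m + 1 := ⟨n - 1, by omega⟩
    have e1 : F (m + 1) (k + 1) = ∑ i ∈ Finset.range (m + 1), F (m + 1) (k + 1 - (1 + i)) := by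
      rw [hrec (m + 1) (k + 1) (by omega), ← Finset.Ico_add_one_right_eq_Icc,
        Finset.sum_Ico_eq_sum_range]
      simp
    have e2 : F (m + 1) k = ∑ i ∈ Finset.range (m + 1), F (m + 1) (k - (1 + i)) := by
      rw [hrec (m + 1) k hk, ← Finset.Ico_add_one_right_eq_Icc, Finset.sum_Ico_eq_sum_range]
      simp
    rw [Finset.sum_range_succ'] at e1
    rw [Finset.sum_range_succ] at e2
    have e3 : ∀ i, k + 1 - (1 + (i + 1)) = k - (1 + i) := by intro i; omega
    simp only [e3] at e1
    have e4 : k + 1 - (1 + 0) = k := by omega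
    rw [e4] at e1
    have e5 : k - (1 + m) = k - (m + 1) := by ring_nf
    rw [e5] at e2
    omega
  -- now the main statement
  intro n k hn hk
  have hkey := key n (by omega) k hk
  have main : (2 * F n (k - n) + 1 ≤ F n k ∧ ¬(n = 2 ∧ k = 4)) ∨
      (2 * F n (k - n) = F n k ∧ n = 2 ∧ k = 4) := by
    rcases lt_trichotomy k (2 * n) with hc | hc | hc
    · -- k < 2n : F n (k - n) = 0
      left
      have hz : F n (k - n) = 0 := h0 n (k - n) (by omega) (by omega)
      have h1k : 1 ≤ F n k := hpos n (by omega) k (by omega)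
      constructor
      · omega
      · rintro ⟨rfl, rfl⟩; omega
    · -- k = 2n
      have hkn : k - n = n := by omega
      rw [hkn, h1 n]
      rcases eq_or_lt_of_le (show 2 ≤ n from hn) with h2 | h2
      · -- n = 2, k = 4
        right
        have hn2 : n = 2 := h2.symm
        subst hn2
        have hk4 : k = 4 := by omega
        subst hk4
        have f1 : F 2 1 = 0 := h0 2 1 le_rfl (by norm_num)
        have f2 : F 2 2 = 1 := h1 2
        have hIcc : (Finset.Icc 1 2 : Finset ℕ) = {1, 2} := rfl
        have f3 : F 2 3 = 1 := by
          rw [hrec 2 3 (by norm_num), hIcc, Finset.sum_pair (by norm_num)]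
          norm_num [f1, f2]
        have f4 : F 2 4 = 2 := by
          rw [hrec 2 4 (by norm_num), hIcc, Finset.sum_pair (by norm_num)]
          norm_num [f2, f3]
        exact ⟨by omega, rfl, rfl⟩
      · -- n ≥ 3 : F n k ≥ 3
        left
        have hA := hpair n hn k (by omega) 1 n le_rfl (by omega) le_rfl
        have hB := hpair n hn (n + 2) (by omega) 1 2 le_rfl (by omega) hn
        have hB1 : n + 2 - 1 = n + 1 := by omega
        have hB2 : n + 2 - 2 = n := by omega
        rw [hB1, hB2, h1 n] at hB
        have hB3 : 1 ≤ F n (n + 1) := hpos n (by omega) (n + 1) (by omega)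
        have hC : F n (n + 2) ≤ F n (k - 1) := hmono n (by omega) (n + 2) (k - 1) (by omega) (by omega)
        have hD : F n (k - n) = 1 := by rw [hkn, h1 n]
        rw [hkn, h1 n] at hA
        constructor
        · omega
        · rintro ⟨rfl, rfl⟩; omega
    · -- k > 2n : strict
      left
      have hA := hpair n hn k (by omega) 1 2 le_rfl (by omega) hn
      have hB : F n (k - n) ≤ F n (k - 2) :=
        hmono n (by omega) (k - n) (k - 2) (by omega) (by omega)
      have hC : F n (k - n) + 1 ≤ F n (k - n + 1) :=
        hstrict n hn (k - n) (by omega)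
      have hD : F n (k - n + 1) ≤ F n (k - 1) :=
        hmono n (by omega) (k - n + 1) (k - 1) (by omega) (by omega)
      constructor
      · omega
      · rintro ⟨rfl, rfl⟩; omega
  constructor
  · rcases main with ⟨h, _⟩ | ⟨h, _⟩ <;> omega
  · constructor
    · intro heq
      rcases main with ⟨h, _⟩ | ⟨_, h⟩
      · omega
      · exact h
    · rintro ⟨rfl, rfl⟩
      rcases main with ⟨_, h⟩ | ⟨h, _⟩
      · exact absurd ⟨rfl, rfl⟩ h
      · omega
end

section
/- The number of headstrong compositions of k equals Σ_{n=1}^{k} F(n, k), where F(n,·) is the n-th order generalized Fibonacci sequence (F(n,k)=0 for 1≤k<n, F(n,n)=1, F(n,k)=Σ_{j=1}^n F(n,k-j) for k>n). -/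
/-- Compositions of `m` with all parts in `[1, n]`. -/
def C (n : ℕ) : ℕ → Finset (List ℕ)
  | 0 => {[]}
  | (m+1) =>
    (Finset.Icc 1 (min n (m+1))).attach.biUnion
      (fun j => (C n (m + 1 - j.1)).image (j.1 :: ·))
decreasing_by
  have := (Finset.mem_Icc.mp j.2).1
  omega

lemma mem_C (n : ℕ) : ∀ m l, l ∈ C n m ↔ l.sum = m ∧ ∀ x ∈ l, 1 ≤ x ∧ x ≤ n := by
  intro m
  induction m using Nat.strong_induction_on with
  | _ m ih =>
    match m with
    | 0 =>
      intro l
      simp only [C, Finset.mem_singleton]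
      constructor
      · rintro rfl; simp
      · rintro ⟨hs, hp⟩
        cases l with
        | nil => rfl
        | cons a t =>
          have := hp a (by simp)
          simp only [List.sum_cons] at hs
          omega
    | (m+1) =>
      intro l
      simp only [C, Finset.mem_biUnion, Finset.mem_attach, Finset.mem_image, true_and,
        Subtype.exists]
      constructor
      · rintro ⟨j, hj, t, ht, rfl⟩
        rw [Finset.mem_Icc] at hj
        rw [ih _ (by omega)] at ht
        obtain ⟨hts, htp⟩ := ht
        refine ⟨by simp [List.sum_cons, hts]; omega, ?_⟩
        intro x hx
        rcases List.mem_cons.mp hx with rfl | hx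
        · omega
        · exact htp x hx
      · rintro ⟨hs, hp⟩
        cases l with
        | nil => simp at hs
        | cons a t =>
          have ha := hp a (by simp)
          have hat : a ≤ m + 1 := by
            simp only [List.sum_cons] at hs; omega
          refine ⟨a, Finset.mem_Icc.mpr ⟨ha.1, by omega⟩, t, ?_, rfl⟩
          rw [ih _ (by omega)]
          refine ⟨?_, fun x hx => hp x (by simp [hx])⟩
          simp only [List.sum_cons] at hs
          omega

lemma card_C (F : ℕ → ℕ → ℕ)
    (h0 : ∀ n k, 1 ≤ k → k < n → F n k = 0)
    (h1 : ∀ n, F n n = 1)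
    (hrec : ∀ n k, n < k → F n k = ∑ j ∈ Finset.Icc 1 n, F n (k - j))
    (n : ℕ) : ∀ m, (C n m).card = F n (n + m) := by
  intro m
  induction m using Nat.strong_induction_on with
  | _ m ih =>
    match m with
    | 0 => simp [C, h1]
    | (m+1) =>
      have hdisj : ∀ x ∈ (Finset.Icc 1 (min n (m+1))).attach,
          ∀ y ∈ (Finset.Icc 1 (min n (m+1))).attach, x ≠ y →
          Disjoint ((C n (m + 1 - x.1)).image (x.1 :: ·))
            ((C n (m + 1 - y.1)).image (y.1 :: ·)) := by
        intro x _ y _ hxy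
        rw [Finset.disjoint_left]
        rintro l hx hy
        obtain ⟨t1, _, rfl⟩ := Finset.mem_image.mp hx
        obtain ⟨t2, _, h2⟩ := Finset.mem_image.mp hy
        apply hxy
        exact Subtype.ext (List.cons.injEq _ _ _ _ ▸ h2).1.symm
      rw [C, Finset.card_biUnion hdisj]
      have hsum : ∑ j ∈ (Finset.Icc 1 (min n (m+1))).attach,
          ((C n (m + 1 - j.1)).image (j.1 :: ·)).card
          = ∑ j ∈ Finset.Icc 1 (min n (m+1)), (C n (m + 1 - j)).card := by
        rw [← Finset.sum_attach (Finset.Icc 1 (min n (m+1)))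
          (fun j => (C n (m + 1 - j)).card)]
        refine Finset.sum_congr rfl fun j _ => ?_
        exact Finset.card_image_of_injective _ (List.cons_injective)
      rw [hsum, hrec n (n + (m+1)) (by omega)]
      have hcongr : ∑ j ∈ Finset.Icc 1 (min n (m+1)), (C n (m + 1 - j)).card
          = ∑ j ∈ Finset.Icc 1 (min n (m+1)), F n (n + (m+1) - j) := by
        refine Finset.sum_congr rfl fun j hj => ?_
        rw [Finset.mem_Icc] at hj
        rw [ih (m + 1 - j) (by omega)]
        congr 1
        omega
      rw [hcongr]
      refine Finset.sum_subset ?_ ?_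
      · apply Finset.Icc_subset_Icc_right
        omega
      · intro j hj hj'
        rw [Finset.mem_Icc] at hj
        rw [Finset.mem_Icc] at hj'
        apply h0
        · omega
        · omega

theorem stmt11 (F : ℕ → ℕ → ℕ)
    (h0 : ∀ n k, 1 ≤ k → k < n → F n k = 0)
    (h1 : ∀ n, F n n = 1)
    (hrec : ∀ n k, n < k → F n k = ∑ j ∈ Finset.Icc 1 n, F n (k - j)) :
    ∀ k, 1 ≤ k →
      {l : List ℕ | IsHeadstrong k l}.ncard = ∑ n ∈ Finset.Icc 1 k, F n k := by
  intro k hk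
  set D : Finset (List ℕ) :=
    (Finset.Icc 1 k).biUnion (fun n => (C n (k - n)).image (n :: ·)) with hD
  have hset : {l : List ℕ | IsHeadstrong k l} = ↑D := by
    ext l
    simp only [Set.mem_setOf_eq, Finset.coe_biUnion, Set.mem_iUnion, Finset.mem_coe,
      Finset.mem_image, hD, Finset.mem_biUnion]
    constructor
    · rintro ⟨hs, hpos, hle⟩
      cases l with
      | nil => simp at hs; omega
      | cons a t =>
        have ha1 : 0 < a := hpos a (by simp)
        have hsum : a + t.sum = k := by simpa [List.sum_cons] using hs
        refine ⟨a, Finset.mem_Icc.mpr ⟨ha1, by omega⟩, t, ?_, rfl⟩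
        rw [mem_C]
        refine ⟨by omega, fun x hx => ⟨hpos x (by simp [hx]), ?_⟩⟩
        simpa using hle x (by simp [hx])
    · rintro ⟨n, hn, t, ht, rfl⟩
      rw [Finset.mem_Icc] at hn
      rw [mem_C] at ht
      obtain ⟨hts, htp⟩ := ht
      refine ⟨by simp [List.sum_cons, hts]; omega, ?_, ?_⟩
      · intro x hx
        rcases List.mem_cons.mp hx with rfl | hx
        · omega
        · exact (htp x hx).1
      · intro x hx
        rcases List.mem_cons.mp hx with rfl | hx
        · simp
        · simpa using (htp x hx).2
  rw [hset, Set.ncard_coe_finset]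
  have hdisj : ∀ x ∈ Finset.Icc 1 k, ∀ y ∈ Finset.Icc 1 k, x ≠ y →
      Disjoint ((C x (k - x)).image (x :: ·)) ((C y (k - y)).image (y :: ·)) := by
    intro x _ y _ hxy
    rw [Finset.disjoint_left]
    rintro l hx hy
    obtain ⟨t1, _, rfl⟩ := Finset.mem_image.mp hx
    obtain ⟨t2, _, h2⟩ := Finset.mem_image.mp hy
    exact hxy (List.cons.injEq _ _ _ _ ▸ h2).1.symm
  rw [hD, Finset.card_biUnion hdisj]
  refine Finset.sum_congr rfl fun n hn => ?_
  rw [Finset.mem_Icc] at hn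
  rw [Finset.card_image_of_injective _ (List.cons_injective),
    card_C F h0 h1 hrec n (k - n)]
  congr 1
  omega
end

section
/- Let d(A) be the number of sumset divisors of A. For all k ≥ 1, 2·d({0,...,k-1}) ≥ d({0,...,k}), with strict inequality for k > 1. -/
open Pointwise

/-- Auxiliary predicate characterizing sumset divisors of `Finset.range N`. -/
def Qpred (N : ℕ) (B : Finset ℕ) : Prop :=
  0 ∈ B ∧ ∀ y < N, ∃ x ∈ B, x ≤ y ∧ y + B.sup id < x + N

lemma sup_mem_of_nonempty {B : Finset ℕ} (h : B.Nonempty) : B.sup id ∈ B := by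
  rw [← Finset.sup'_eq_sup h, ← Finset.max'_eq_sup']; exact B.max'_mem h

lemma Qpred_singleton (N : ℕ) : Qpred N {0} := by
  refine ⟨Finset.mem_singleton_self 0, fun y hy => ⟨0, Finset.mem_singleton_self 0, Nat.zero_le _, ?_⟩⟩
  simpa using hy

lemma Qpred_pair {N : ℕ} (hN : 2 ≤ N) : Qpred N ({0, 1} : Finset ℕ) := by
  have hsup : ({0, 1} : Finset ℕ).sup id = 1 := by decide
  refine ⟨by decide, fun y hy => ?_⟩
  rcases Nat.eq_zero_or_pos y with rfl | hy1
  · exact ⟨0, by decide, le_refl _, by omega⟩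
  · exact ⟨1, by decide, hy1, by omega⟩

lemma ne_singleton_zero {N : ℕ} {B : Finset ℕ} (h : ¬ Qpred N B) (h0 : 0 ∈ B) :
    B ≠ {0} := by
  rintro rfl; exact h (Qpred_singleton N)

lemma sup_pos_of_ne {B : Finset ℕ} (h0 : 0 ∈ B) (hne : B ≠ {0}) : 1 ≤ B.sup id := by
  by_contra h
  apply hne
  have hb : B.sup id = 0 := by omega
  apply Finset.eq_singleton_iff_unique_mem.2 ⟨h0, fun x hx => ?_⟩
  have := Finset.le_sup (f := id) hx
  simp only [id] at this; omega

/-- Characterization: `B` is a sumset divisor of `range N` iff `Qpred N B`, for `N ≥ 1`. -/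
lemma div_iff {N : ℕ} (hN : 1 ≤ N) (B : Finset ℕ) :
    (∃ C : Finset ℕ, Finset.range N = B + C) ↔ Qpred N B := by
  constructor
  · rintro ⟨C, hC⟩
    have h0 : (0 : ℕ) ∈ Finset.range N := Finset.mem_range.2 hN
    rw [hC] at h0
    obtain ⟨x, hx, c, hc, hxc⟩ := Finset.mem_add.1 h0
    have hx0 : x = 0 := by omega
    have hc0 : c = 0 := by omega
    subst hx0; subst hc0
    refine ⟨hx, fun y hy => ?_⟩
    have hy' : y ∈ Finset.range N := Finset.mem_range.2 hy
    rw [hC] at hy'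
    obtain ⟨x, hxB, c, hcC, hxc⟩ := Finset.mem_add.1 hy'
    have hbB : B.sup id ∈ B := sup_mem_of_nonempty ⟨0, hx⟩
    have hsum : B.sup id + c ∈ Finset.range N := by
      rw [hC]; exact Finset.add_mem_add hbB hcC
    have hlt := Finset.mem_range.1 hsum
    refine ⟨x, hxB, ?_, ?_⟩ <;> omega
  · rintro ⟨h0, hQ⟩
    refine ⟨Finset.range (N - B.sup id), ?_⟩
    ext y
    constructor
    · intro hy
      obtain ⟨x, hx, hxy, hlt⟩ := hQ y (Finset.mem_range.1 hy)
      exact Finset.mem_add.2 ⟨x, hx, y - x, Finset.mem_range.2 (by omega), by omega⟩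
    · intro hy
      obtain ⟨x, hx, c, hc, rfl⟩ := Finset.mem_add.1 hy
      have hxb : x ≤ B.sup id := Finset.le_sup (f := id) hx
      have hc' := Finset.mem_range.1 hc
      exact Finset.mem_range.2 (by omega)

/-- Erasing the max of a divisor of `range (N+1)` (other than `{0}`) gives a divisor of
`range N`. -/
lemma erase_lemma {N : ℕ} {B : Finset ℕ} (h : Qpred (N + 1) B) (hne : B ≠ {0}) :
    Qpred N (B.erase (B.sup id)) := by
  obtain ⟨h0, hQ⟩ := h
  set b := B.sup id with hb
  have hb1 : 1 ≤ b := sup_pos_of_ne h0 hne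
  have h0' : 0 ∈ B.erase b := Finset.mem_erase.2 ⟨by omega, h0⟩
  set s := (B.erase b).sup id with hs
  have hsmem : s ∈ B.erase b := sup_mem_of_nonempty ⟨0, h0'⟩
  have hsb : s < b := by
    obtain ⟨hne', hmem⟩ := Finset.mem_erase.1 hsmem
    have := Finset.le_sup (f := id) hmem
    simp only [id] at this
    omega
  refine ⟨h0', fun y hy => ?_⟩
  rcases le_or_gt s y with hcase | hcase
  · exact ⟨s, hsmem, hcase, by omega⟩
  · obtain ⟨x, hx, hxy, hlt⟩ := hQ y (by omega)
    have hxb : x ≠ b := by omega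
    exact ⟨x, Finset.mem_erase.2 ⟨hxb, hx⟩, hxy, by omega⟩

/-- Asymmetric key step for injectivity. -/
lemma inj_aux {N : ℕ} {B1 B2 : Finset ℕ}
    (h2 : Qpred (N + 1) B2) (n1 : ¬ Qpred N B1) (h01 : 0 ∈ B1) (h02 : 0 ∈ B2)
    (he : B1.erase (B1.sup id) = B2.erase (B2.sup id))
    (hlt : B1.sup id < B2.sup id) : False := by
  set b1 := B1.sup id with hb1
  set b2 := B2.sup id with hb2
  have hne1 : B1 ≠ {0} := ne_singleton_zero n1 h01
  have hb1pos : 1 ≤ b1 := sup_pos_of_ne h01 hne1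
  have h0E : 0 ∈ B1.erase b1 := Finset.mem_erase.2 ⟨by omega, h01⟩
  set s := (B1.erase b1).sup id with hs
  have hsmem1 : s ∈ B1.erase b1 := sup_mem_of_nonempty ⟨0, h0E⟩
  have hsmem2 : s ∈ B2.erase b2 := he ▸ hsmem1
  have hsb1 : s < b1 := by
    obtain ⟨hne', hmem⟩ := Finset.mem_erase.1 hsmem1
    have := Finset.le_sup (f := id) hmem
    simp only [id] at this; omega
  have hsb2 : s < b2 := by
    obtain ⟨hne', hmem⟩ := Finset.mem_erase.1 hsmem2
    have := Finset.le_sup (f := id) hmem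
    simp only [id] at this; omega
  -- extract witness from n1
  have hwit : ∃ y < N, ∀ x ∈ B1, x ≤ y → x + N ≤ y + b1 := by
    by_contra hcon
    push_neg at hcon
    exact n1 ⟨h01, fun y hy => by
      obtain ⟨x, hx, hxy, hlt'⟩ := hcon y hy
      exact ⟨x, hx, hxy, by omega⟩⟩
  obtain ⟨y1, hy1N, hP⟩ := hwit
  have hb1mem : b1 ∈ B1 := sup_mem_of_nonempty ⟨0, h01⟩
  have hy1b1 : y1 < b1 := by
    by_contra hc
    have := hP b1 hb1mem (by omega)
    omega
  have hb2N : b2 ≤ N := by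
    obtain ⟨x, hx, hx0, hlt'⟩ := h2.2 0 (by omega)
    omega
  rcases lt_or_ge y1 s with hcase | hcase
  · -- y1 < s : use y1 against Q (N+1) B2
    obtain ⟨x, hx, hxy, hlt'⟩ := h2.2 y1 (by omega)
    have hxE : x ∈ B2.erase b2 := Finset.mem_erase.2 ⟨by omega, hx⟩
    rw [← he] at hxE
    have hxB1 : x ∈ B1 := Finset.mem_of_mem_erase hxE
    have := hP x hxB1 hxy
    omega
  · -- s ≤ y1 : use y1 + (b2 - b1)
    have hsP : s + N ≤ y1 + b1 := hP s (Finset.mem_of_mem_erase hsmem1) hcase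
    obtain ⟨x, hx, hxy, hlt'⟩ := h2.2 (y1 + (b2 - b1)) (by omega)
    have hxE : x ∈ B2.erase b2 := Finset.mem_erase.2 ⟨by omega, hx⟩
    rw [← he] at hxE
    have hxs : x ≤ s := by
      exact Finset.le_sup (f := id) hxE
    omega

lemma inj_lemma {N : ℕ} {B1 B2 : Finset ℕ}
    (h1 : Qpred (N + 1) B1) (h2 : Qpred (N + 1) B2)
    (n1 : ¬ Qpred N B1) (n2 : ¬ Qpred N B2)
    (he : B1.erase (B1.sup id) = B2.erase (B2.sup id)) : B1 = B2 := by
  have hsup : B1.sup id = B2.sup id := by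
    rcases lt_trichotomy (B1.sup id) (B2.sup id) with h | h | h
    · exact absurd (inj_aux h2 n1 h1.1 h2.1 he h) (by simp)
    · exact h
    · exact absurd (inj_aux h1 n2 h2.1 h1.1 he.symm h) (by simp)
  have e1 : insert (B1.sup id) (B1.erase (B1.sup id)) = B1 :=
    Finset.insert_erase (sup_mem_of_nonempty ⟨0, h1.1⟩)
  have e2 : insert (B2.sup id) (B2.erase (B2.sup id)) = B2 :=
    Finset.insert_erase (sup_mem_of_nonempty ⟨0, h2.1⟩)
  rw [← e1, ← e2, he, hsup]

lemma not_erase_even {N : ℕ} (hNe : N % 2 = 0) {B : Finset ℕ}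
    (h1 : Qpred (N + 1) B) (n1 : ¬ Qpred N B) :
    B.erase (B.sup id) ≠ ({0} : Finset ℕ) := by
  intro he
  set b := B.sup id with hb
  have h0 : 0 ∈ B := h1.1
  have hne : B ≠ {0} := ne_singleton_zero n1 h0
  have hb1 : 1 ≤ b := sup_pos_of_ne h0 hne
  have hBeq : B = insert b ({0} : Finset ℕ) := by
    rw [← he, Finset.insert_erase (sup_mem_of_nonempty ⟨0, h0⟩)]
  have hmem : ∀ x ∈ B, x = b ∨ x = 0 := by
    intro x hx; rw [hBeq] at hx; simp at hx; tauto
  have hbN : b ≤ N := by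
    obtain ⟨x, hx, hx0, hlt'⟩ := h1.2 0 (by omega)
    omega
  -- from Q(N+1) at y = b - 1 : 2b ≤ N + 1
  have h2b : 2 * b ≤ N + 1 := by
    obtain ⟨x, hx, hxy, hlt'⟩ := h1.2 (b - 1) (by omega)
    rcases hmem x hx with rfl | rfl <;> omega
  -- from ¬ Q N : 2b ≥ N + 1
  have hwit : ∃ y < N, ∀ x ∈ B, x ≤ y → x + N ≤ y + b := by
    by_contra hcon
    push_neg at hcon
    exact n1 ⟨h0, fun y hy => by
      obtain ⟨x, hx, hxy, hlt'⟩ := hcon y hy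
      exact ⟨x, hx, hxy, by omega⟩⟩
  obtain ⟨y1, hy1N, hP⟩ := hwit
  have hy1b : y1 < b := by
    by_contra hc
    have := hP b (sup_mem_of_nonempty ⟨0, h0⟩) (by omega)
    omega
  have := hP 0 h0 (by omega)
  omega

lemma not_erase_odd {N : ℕ} (hNo : N % 2 = 1) (hN3 : 3 ≤ N) {B : Finset ℕ}
    (h1 : Qpred (N + 1) B) (n1 : ¬ Qpred N B) :
    B.erase (B.sup id) ≠ ({0, 1} : Finset ℕ) := by
  intro he
  set b := B.sup id with hb
  have h0 : 0 ∈ B := h1.1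
  have h1mem : (1 : ℕ) ∈ B := Finset.mem_of_mem_erase (by rw [he]; decide)
  have hb2 : 2 ≤ b := by
    have hble : 1 ≤ b := Finset.le_sup (f := id) h1mem
    rcases Nat.lt_or_ge b 2 with hc | hc
    · exfalso
      have hbeq : b = 1 := by omega
      have : (1 : ℕ) ∈ B.erase b := by rw [he]; decide
      rw [hbeq] at this
      exact (Finset.mem_erase.1 this).1 rfl
    · exact hc
  have hBeq : B = insert b ({0, 1} : Finset ℕ) := by
    rw [← he, Finset.insert_erase (sup_mem_of_nonempty ⟨0, h0⟩)]
  have hmem : ∀ x ∈ B, x = b ∨ x = 0 ∨ x = 1 := by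
    intro x hx; rw [hBeq] at hx; simp at hx; tauto
  have hbN : b ≤ N := by
    obtain ⟨x, hx, hx0, hlt'⟩ := h1.2 0 (by omega)
    have := hmem x hx
    omega
  have h2b : 2 * b ≤ N + 2 := by
    obtain ⟨x, hx, hxy, hlt'⟩ := h1.2 (b - 1) (by omega)
    rcases hmem x hx with rfl | rfl | rfl <;> omega
  have hwit : ∃ y < N, ∀ x ∈ B, x ≤ y → x + N ≤ y + b := by
    by_contra hcon
    push_neg at hcon
    exact n1 ⟨h0, fun y hy => by
      obtain ⟨x, hx, hxy, hlt'⟩ := hcon y hy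
      exact ⟨x, hx, hxy, by omega⟩⟩
  obtain ⟨y1, hy1N, hP⟩ := hwit
  have hy1b : y1 < b := by
    by_contra hc
    have := hP b (sup_mem_of_nonempty ⟨0, h0⟩) (by omega)
    omega
  have h00 := hP 0 h0 (by omega)
  rcases Nat.eq_zero_or_pos y1 with rfl | hy1pos
  · omega
  · have := hP 1 h1mem (by omega)
    omega

lemma Qpred_finite {N : ℕ} (hN : 1 ≤ N) : {B : Finset ℕ | Qpred N B}.Finite := by
  apply Set.Finite.subset (Finset.finite_toSet ((Finset.range N).powerset))
  rintro B ⟨h0, hQ⟩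
  simp only [Finset.coe_powerset, Set.mem_preimage, Set.mem_powerset_iff, Finset.coe_subset]
  obtain ⟨x, hx, hx0, hlt⟩ := hQ 0 hN
  intro z hz
  have hzs := Finset.le_sup (f := id) hz
  simp only [id] at hzs
  exact Finset.mem_range.2 (by omega)

theorem stmt12 (k : ℕ) (hk : 1 ≤ k) :
    numDivisors (Finset.range (k + 1)) ≤ 2 * numDivisors (Finset.range k) ∧
      (1 < k → numDivisors (Finset.range (k + 1)) < 2 * numDivisors (Finset.range k)) := by
  have hset : ∀ M, 1 ≤ M →
      {B : Finset ℕ | ∃ C : Finset ℕ, Finset.range M = B + C} = {B : Finset ℕ | Qpred M B} := by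
    intro M hM; ext B; exact div_iff hM B
  have hnd : ∀ M, 1 ≤ M →
      numDivisors (Finset.range M) = {B : Finset ℕ | Qpred M B}.ncard := by
    intro M hM; unfold numDivisors; rw [hset M hM]
  set S1 := {B : Finset ℕ | Qpred k B} with hS1
  set S2 := {B : Finset ℕ | Qpred (k + 1) B} with hS2
  have hfin1 : S1.Finite := Qpred_finite hk
  have hfin2 : S2.Finite := Qpred_finite (by omega)
  have hdecomp : S2.ncard ≤ (S2 ∩ S1).ncard + (S2 \ S1).ncard := by
    conv_lhs => rw [← Set.inter_union_diff S2 S1]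
    exact Set.ncard_union_le _ _
  have hinter : (S2 ∩ S1).ncard ≤ S1.ncard :=
    Set.ncard_le_ncard Set.inter_subset_right hfin1
  have hmaps : Set.MapsTo (fun B : Finset ℕ => B.erase (B.sup id)) (S2 \ S1) S1 := by
    rintro B ⟨hB2, hB1⟩
    exact erase_lemma hB2 (ne_singleton_zero hB1 hB2.1)
  have hinj : Set.InjOn (fun B : Finset ℕ => B.erase (B.sup id)) (S2 \ S1) := by
    rintro B1 ⟨hB12, hB11⟩ B2 ⟨hB22, hB21⟩ he
    exact inj_lemma hB12 hB22 hB11 hB21 he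
  have hdiff : (S2 \ S1).ncard ≤ S1.ncard :=
    Set.ncard_le_ncard_of_injOn _ hmaps hinj hfin1
  constructor
  · rw [hnd (k + 1) (by omega), hnd k hk, ← hS1, ← hS2]
    omega
  · intro hk1
    rw [hnd (k + 1) (by omega), hnd k hk, ← hS1, ← hS2]
    -- choose missed element T depending on parity
    set T : Finset ℕ := if k % 2 = 0 then {0} else {0, 1} with hT
    have hTmem : T ∈ S1 := by
      rw [hT]
      split_ifs with hpar
      · exact Qpred_singleton k
      · exact Qpred_pair (by omega)
    have hmaps' : Set.MapsTo (fun B : Finset ℕ => B.erase (B.sup id)) (S2 \ S1) (S1 \ {T}) := by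
      rintro B ⟨hB2, hB1⟩
      refine ⟨hmaps ⟨hB2, hB1⟩, ?_⟩
      simp only [Set.mem_singleton_iff, hT]
      split_ifs with hpar
      · exact not_erase_even hpar hB2 hB1
      · exact not_erase_odd (by omega) (by omega) hB2 hB1
    have hdiff' : (S2 \ S1).ncard ≤ (S1 \ {T}).ncard :=
      Set.ncard_le_ncard_of_injOn _ hmaps' hinj (hfin1.subset Set.diff_subset)
    have hlt : (S1 \ {T}).ncard < S1.ncard :=
      Set.ncard_diff_singleton_lt_of_mem hTmem hfin1
    omega
end

section
/- Let d denote the sumset-divisor counting function on finite subsets of ℕ. For any 1 ≤ j ≤ k, (j+1)·d({0,...,k-j}) ≤ 2·d({0,...,k-1}), with equality if and only if j = 1, or (k = 3 and j = 2). -/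
open Pointwise
namespace SumDiv
open Finset
def DD (n : ℕ) : Finset (Finset ℕ) :=
  (Finset.range n).powerset.filter (fun B => Finset.range n = B + Finset.range (n - B.sup id))
def UU (n : ℕ) : Finset (Finset ℕ) := (DD n).filter (fun B => 1 ∉ B)
lemma mem_DD {n : ℕ} {B : Finset ℕ} :
    B ∈ DD n ↔ B ⊆ Finset.range n ∧ Finset.range n = B + Finset.range (n - B.sup id) := by
  simp [DD]
lemma range_eq_add_range {B : Finset ℕ} {n t : ℕ} :
    Finset.range n = B + Finset.range t ↔
      (∀ b ∈ B, ∀ c < t, b + c < n) ∧ (∀ x < n, ∃ b ∈ B, ∃ c, c < t ∧ x = b + c) := by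
  constructor
  · intro h
    constructor
    · intro b hb c hc
      have : b + c ∈ B + Finset.range t := Finset.add_mem_add hb (by simpa using hc)
      rw [← h] at this
      simpa using this
    · intro x hx
      have : x ∈ B + Finset.range t := by rw [← h]; simpa using hx
      rw [Finset.mem_add] at this
      obtain ⟨b, hb, c, hc, hbc⟩ := this
      exact ⟨b, hb, c, by simpa using hc, hbc.symm⟩
  · rintro ⟨h1, h2⟩
    ext x
    simp only [Finset.mem_range, Finset.mem_add]
    constructor
    · intro hx
      obtain ⟨b, hb, c, hc, hbc⟩ := h2 x hx
      exact ⟨b, hb, c, by simpa using hc, hbc.symm⟩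
    · rintro ⟨b, hb, c, hc, rfl⟩
      exact h1 b hb c (by simpa using hc)
lemma sup_mem {B : Finset ℕ} (hB : B.Nonempty) : B.sup id ∈ B := by
  have := B.max'_mem hB
  rwa [Finset.max'_eq_sup', Finset.sup'_eq_sup] at this
lemma zero_mem_of_mem {n : ℕ} {B : Finset ℕ} (hn : 1 ≤ n) (hB : B ∈ DD n) : 0 ∈ B := by
  obtain ⟨hsub, hP⟩ := mem_DD.mp hB
  rw [range_eq_add_range] at hP
  obtain ⟨b, hb, c, hc, hbc⟩ := hP.2 0 hn
  have : b = 0 := by omega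
  rwa [this] at hb
lemma nonempty_of_mem {n : ℕ} {B : Finset ℕ} (hn : 1 ≤ n) (hB : B ∈ DD n) : B.Nonempty :=
  ⟨0, zero_mem_of_mem hn hB⟩
lemma sup_lt_of_mem {n : ℕ} {B : Finset ℕ} (hn : 1 ≤ n) (hB : B ∈ DD n) : B.sup id < n := by
  obtain ⟨hsub, _⟩ := mem_DD.mp hB
  have : B.sup id ∈ B := sup_mem (nonempty_of_mem hn hB)
  simpa using hsub this
lemma sup_insert_zero_image_add {B : Finset ℕ} (hB : B.Nonempty) (k : ℕ) :
    (insert 0 (B.image (fun b => b + k))).sup id = B.sup id + k := by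
  rw [Finset.sup_insert, Finset.sup_image]
  have h1 : B.sup ((id : ℕ → ℕ) ∘ (fun b => b + k)) = B.sup id + k := by
    apply le_antisymm
    · apply Finset.sup_le
      intro b hb
      have := Finset.le_sup (f := (id : ℕ → ℕ)) hb
      simp only [id, Function.comp] at this ⊢
      omega
    · have := Finset.le_sup (f := ((id : ℕ → ℕ) ∘ (fun b => b + k))) (sup_mem hB)
      simpa using this
  rw [h1]
  simp

-- NEW PART: the shift map lands in DD (n+k) and is "1-free" for k = 2.
lemma shift_mem {n k : ℕ} {B : Finset ℕ} (hn : 1 ≤ n) (hk : 1 ≤ k) (hB : B ∈ DD n)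
    (hsup : B.sup id + k ≤ n) :
    insert 0 (B.image (fun b => b + k)) ∈ DD (n + k) ∧
      Finset.range (n + k) = insert 0 (B.image (fun b => b + k)) + Finset.range (n - B.sup id) := by
  obtain ⟨hsub, hP⟩ := mem_DD.mp hB
  have hBne : B.Nonempty := nonempty_of_mem hn hB
  have h0B : 0 ∈ B := zero_mem_of_mem hn hB
  set m := B.sup id with hm
  have hmn : m < n := sup_lt_of_mem hn hB
  rw [range_eq_add_range] at hP
  obtain ⟨hP1, hP2⟩ := hP
  have hsupB' : (insert 0 (B.image (fun b => b + k))).sup id = m + k :=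
    sup_insert_zero_image_add hBne k
  have harg : n + k - (m + k) = n - m := by omega
  have key : Finset.range (n + k) =
      insert 0 (B.image (fun b => b + k)) + Finset.range (n - m) := by
    rw [range_eq_add_range]
    constructor
    · intro b' hb' c hc
      rcases Finset.mem_insert.mp hb' with rfl | hb'
      · omega
      · obtain ⟨b, hb, rfl⟩ := Finset.mem_image.mp hb'
        have := hP1 b hb c hc
        omega
    · intro x hx
      by_cases hxk : x < k
      · refine ⟨0, Finset.mem_insert_self _ _, x, ?_, by omega⟩
        omega
      · obtain ⟨b, hb, c, hc, hbc⟩ := hP2 (x - k) (by omega)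
        exact ⟨b + k, Finset.mem_insert_of_mem (Finset.mem_image_of_mem _ hb), c, hc, by omega⟩
  constructor
  · rw [mem_DD, hsupB', harg]
    refine ⟨?_, key⟩
    intro a ha
    rcases Finset.mem_insert.mp ha with rfl | ha
    · simp; omega
    · obtain ⟨b, hb, rfl⟩ := Finset.mem_image.mp ha
      have := hsub hb
      simp only [Finset.mem_range] at this ⊢
      omega
  · exact key

lemma K1 {n : ℕ} (hn : 1 ≤ n) : (DD (n + 1)).card = (DD n).card + (UU (n + 1)).card := by
  have hsplit := Finset.card_filter_add_card_filter_not
    (s := DD (n+1)) (p := fun B => 1 ∈ B)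
  have hbij : ((DD (n+1)).filter (fun B => 1 ∈ B)).card = (DD n).card := by
    symm
    refine Finset.card_nbij' (fun B => insert 0 (B.image (fun b => b + 1)))
      (fun B' => (B'.erase 0).image (fun b => b - 1)) ?_ ?_ ?_ ?_
    · -- hi
      intro B hB
      have h0B : 0 ∈ B := zero_mem_of_mem hn hB
      have hmem := (shift_mem hn (le_refl 1) hB (by have := sup_lt_of_mem hn hB; omega)).1
      rw [Finset.mem_coe, Finset.mem_filter]
      refine ⟨hmem, ?_⟩
      exact Finset.mem_insert_of_mem (Finset.mem_image.mpr ⟨0, h0B, rfl⟩)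
    · -- hj
      intro B' hB'
      obtain ⟨hB', h1B'⟩ := Finset.mem_filter.mp hB'
      obtain ⟨hsub', hP'⟩ := mem_DD.mp hB'
      have hn1 : 1 ≤ n + 1 := by omega
      have h0B' : 0 ∈ B' := zero_mem_of_mem hn1 hB'
      set m' := B'.sup id with hm'
      have hm'B' : m' ∈ B' := sup_mem (nonempty_of_mem hn1 hB')
      have hm'1 : 1 ≤ m' := le_trans (Finset.le_sup (f := id) h1B') (le_refl _)
      have hm'n : m' < n + 1 := sup_lt_of_mem hn1 hB'
      rw [range_eq_add_range] at hP'
      obtain ⟨hP1', hP2'⟩ := hP'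
      set B := (B'.erase 0).image (fun b => b - 1) with hBdef
      have hBsup : B.sup id = m' - 1 := by
        apply le_antisymm
        · apply Finset.sup_le
          intro a ha
          obtain ⟨b', hb', rfl⟩ := Finset.mem_image.mp ha
          have : b' ≤ m' := Finset.le_sup (f := id) (Finset.mem_of_mem_erase hb')
          simp only [id]
          omega
        · have : m' - 1 ∈ B := by
            apply Finset.mem_image.mpr
            exact ⟨m', Finset.mem_erase.mpr ⟨by omega, hm'B'⟩, rfl⟩
          exact Finset.le_sup (f := id) this
      rw [Finset.mem_coe, mem_DD, hBsup]
      constructor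
      · intro a ha
        obtain ⟨b', hb', rfl⟩ := Finset.mem_image.mp ha
        have hb'm : b' ≠ 0 := (Finset.mem_erase.mp hb').1
        have : b' < n + 1 := by simpa using hsub' (Finset.mem_of_mem_erase hb')
        simp only [Finset.mem_range]
        omega
      · rw [range_eq_add_range]
        constructor
        · intro b hb c hc
          have hble : b ≤ m' - 1 := by rw [← hBsup]; exact Finset.le_sup (f := id) hb
          omega
        · intro x hx
          obtain ⟨b', hb', c, hc, hbc⟩ := hP2' (x + 1) (by omega)
          rcases Nat.eq_zero_or_pos b' with rfl | hb'pos
          · refine ⟨0, ?_, x, ?_, by omega⟩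
            · exact Finset.mem_image.mpr ⟨1, Finset.mem_erase.mpr ⟨by omega, h1B'⟩, rfl⟩
            · omega
          · refine ⟨b' - 1, Finset.mem_image.mpr ⟨b', Finset.mem_erase.mpr ⟨by omega, hb'⟩, rfl⟩,
              c, by omega, by omega⟩
    · -- left inverse
      intro B hB
      ext a
      simp only [Finset.mem_image, Finset.mem_erase, Finset.mem_insert]
      constructor
      · rintro ⟨x, ⟨hx0, hx⟩, rfl⟩
        rcases hx with rfl | ⟨b, hb, rfl⟩
        · omega
        · simpa using hb
      · intro ha
        exact ⟨a + 1, ⟨by omega, Or.inr ⟨a, ha, rfl⟩⟩, by omega⟩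
    · -- right inverse
      intro B' hB'
      obtain ⟨hB'', h1B'⟩ := Finset.mem_filter.mp hB'
      have h0B' : 0 ∈ B' := zero_mem_of_mem (by omega) hB''
      ext a
      simp only [Finset.mem_insert, Finset.mem_image, Finset.mem_erase]
      constructor
      · rintro (rfl | ⟨x, ⟨b', ⟨hb'0, hb'⟩, rfl⟩, rfl⟩)
        · exact h0B'
        · have : b' - 1 + 1 = b' := by omega
          rwa [this]
      · intro ha
        rcases Nat.eq_zero_or_pos a with rfl | hapos
        · exact Or.inl rfl
        · exact Or.inr ⟨a - 1, ⟨a, ⟨by omega, ha⟩, rfl⟩, by omega⟩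
  rw [← hsplit, hbij]
  rfl

lemma DD1 : (DD 1).card = 1 := by decide
lemma DD2 : (DD 2).card = 2 := by decide
lemma DD3 : (DD 3).card = 3 := by decide

lemma divisor_iff {n : ℕ} (hn : 1 ≤ n) (B : Finset ℕ) :
    (∃ C : Finset ℕ, Finset.range n = B + C) ↔ B ∈ DD n := by
  constructor
  · rintro ⟨C, hC⟩
    have hBne : B.Nonempty := by
      rcases Finset.eq_empty_or_nonempty B with rfl | h
      · exfalso
        rw [Finset.empty_add] at hC
        have : (0:ℕ) ∈ (∅ : Finset ℕ) := by rw [← hC]; simpa using (by omega : 0 < n)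
        simp at this
      · exact h
    have hCne : C.Nonempty := by
      rcases Finset.eq_empty_or_nonempty C with rfl | h
      · exfalso
        rw [Finset.add_empty] at hC
        have : (0:ℕ) ∈ (∅ : Finset ℕ) := by rw [← hC]; simpa using (by omega : 0 < n)
        simp at this
      · exact h
    set m := B.sup id with hm
    have hmB : m ∈ B := sup_mem hBne
    obtain ⟨c₀, hc₀⟩ := hCne
    have hmn : m < n := by
      have : m + c₀ ∈ B + C := Finset.add_mem_add hmB hc₀
      rw [← hC] at this
      have := Finset.mem_range.mp this
      omega
    have hcbound : ∀ c ∈ C, c < n - m := by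
      intro c hc
      have : m + c ∈ B + C := Finset.add_mem_add hmB hc
      rw [← hC] at this
      have := Finset.mem_range.mp this
      omega
    have hsub : B ⊆ Finset.range n := by
      intro b hb
      have : b + c₀ ∈ B + C := Finset.add_mem_add hb hc₀
      rw [← hC] at this
      have := Finset.mem_range.mp this
      simp only [Finset.mem_range]
      omega
    rw [mem_DD]
    refine ⟨hsub, ?_⟩
    rw [range_eq_add_range]
    constructor
    · intro b hb c hc
      have hble : b ≤ m := Finset.le_sup (f := id) hb
      omega
    · intro x hx
      have : x ∈ B + C := by rw [← hC]; simpa using hx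
      rw [Finset.mem_add] at this
      obtain ⟨b, hb, c, hc, hbc⟩ := this
      exact ⟨b, hb, c, hcbound c hc, hbc.symm⟩
  · intro hB
    exact ⟨_, (mem_DD.mp hB).2⟩

lemma numDiv_eq {n : ℕ} (hn : 1 ≤ n) : numDivisors (Finset.range n) = (DD n).card := by
  unfold numDivisors
  have : {B : Finset ℕ | ∃ C : Finset ℕ, Finset.range n = B + C} = ↑(DD n) := by
    ext B
    simpa using divisor_iff hn B
  rw [this, Set.ncard_coe_finset]

lemma DD_mono {n : ℕ} (hn : 1 ≤ n) : DD n ⊆ DD (n + 1) := by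
  intro B hB
  obtain ⟨hsub, hP⟩ := mem_DD.mp hB
  have hmB : B.sup id ∈ B := sup_mem (nonempty_of_mem hn hB)
  have hmn : B.sup id < n := sup_lt_of_mem hn hB
  rw [range_eq_add_range] at hP
  obtain ⟨hP1, hP2⟩ := hP
  rw [mem_DD]
  constructor
  · exact hsub.trans (by intro x hx; simp only [Finset.mem_range] at hx ⊢; omega)
  · rw [range_eq_add_range]
    constructor
    · intro b hb c hc
      have : b ≤ B.sup id := Finset.le_sup (f := id) hb
      omega
    · intro x hx
      rcases Nat.lt_or_ge x n with hxn | hxn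
      · obtain ⟨b, hb, c, hc, hbc⟩ := hP2 x hxn
        exact ⟨b, hb, c, by omega, hbc⟩
      · exact ⟨B.sup id, hmB, n - B.sup id, by omega, by omega⟩

lemma UU_mono {n : ℕ} (hn : 1 ≤ n) : UU n ⊆ UU (n + 1) := by
  intro B hB
  obtain ⟨h1, h2⟩ := Finset.mem_filter.mp hB
  exact Finset.mem_filter.mpr ⟨DD_mono hn h1, h2⟩

lemma singleton_zero_mem_UU {n : ℕ} (hn : 1 ≤ n) : ({0} : Finset ℕ) ∈ UU n := by
  rw [UU, Finset.mem_filter]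
  refine ⟨?_, by simp⟩
  rw [mem_DD]
  constructor
  · intro x hx; simp only [Finset.mem_singleton] at hx; simp [hx]; omega
  · have hsup : ({0} : Finset ℕ).sup id = 0 := by simp
    rw [hsup, Nat.sub_zero, range_eq_add_range]
    constructor
    · intro b hb c hc; simp only [Finset.mem_singleton] at hb; omega
    · intro x hx; exact ⟨0, by simp, x, hx, by omega⟩

lemma u_pos {n : ℕ} (hn : 1 ≤ n) : 1 ≤ (UU n).card :=
  Finset.card_pos.mpr ⟨{0}, singleton_zero_mem_UU hn⟩

lemma range_mem_DD {n : ℕ} (hn : 1 ≤ n) : Finset.range n ∈ DD n := by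
  have hsup : (Finset.range n).sup id = n - 1 := by
    apply le_antisymm
    · apply Finset.sup_le; intro b hb; simp only [Finset.mem_range] at hb; simp only [id]; omega
    · exact Finset.le_sup (f := id) (by simp only [Finset.mem_range]; omega)
  rw [mem_DD, hsup]
  refine ⟨Finset.Subset.refl _, ?_⟩
  rw [range_eq_add_range]
  constructor
  · intro b hb c hc; simp only [Finset.mem_range] at hb; omega
  · intro x hx; exact ⟨x, by simpa using hx, 0, by omega, by omega⟩

lemma sup_le_of_ne_range {n : ℕ} {B : Finset ℕ} (hn : 1 ≤ n) (hB : B ∈ DD n)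
    (hne : B ≠ Finset.range n) : B.sup id + 2 ≤ n := by
  obtain ⟨hsub, hP⟩ := mem_DD.mp hB
  have hmn : B.sup id < n := sup_lt_of_mem hn hB
  by_contra hcon
  have hm : B.sup id = n - 1 := by omega
  apply hne
  apply Finset.Subset.antisymm hsub
  intro x hx
  rw [range_eq_add_range] at hP
  obtain ⟨b, hb, c, hc, hbc⟩ := hP.2 x (by simpa using hx)
  have : c = 0 := by omega
  have : x = b := by omega
  rwa [this]

lemma V2 {n : ℕ} (hn : 1 ≤ n) : (DD n).card ≤ (UU (n + 2)).card := by
  classical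
  set D' := (DD n).erase (Finset.range n) with hD'
  have hmem : ∀ B ∈ D', insert 0 (B.image (fun b => b + 2)) ∈ UU (n + 2) := by
    intro B hB'
    have hB : B ∈ DD n := Finset.mem_of_mem_erase hB'
    have hne : B ≠ Finset.range n := (Finset.mem_erase.mp hB').1
    have hsup : B.sup id + 2 ≤ n := sup_le_of_ne_range hn hB hne
    have := (shift_mem hn (by omega : (1:ℕ) ≤ 2) hB hsup).1
    rw [UU, Finset.mem_filter]
    refine ⟨this, ?_⟩
    intro hcon
    rcases Finset.mem_insert.mp hcon with h | h
    · omega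
    · obtain ⟨b, hb, hb2⟩ := Finset.mem_image.mp h
      omega
  have hinj : Set.InjOn (fun B : Finset ℕ => insert 0 (B.image (fun b => b + 2))) (D' : Set (Finset ℕ)) := by
    intro B1 h1 B2 h2 heq
    have key : ∀ (X Y : Finset ℕ), insert 0 (X.image (fun b => b + 2)) =
        insert 0 (Y.image (fun b => b + 2)) → X ⊆ Y := by
      intro X Y hXY a ha
      have : a + 2 ∈ insert 0 (X.image (fun b => b + 2)) :=
        Finset.mem_insert_of_mem (Finset.mem_image_of_mem _ ha)
      rw [hXY] at this
      rcases Finset.mem_insert.mp this with h | h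
      · omega
      · obtain ⟨b, hb, hb2⟩ := Finset.mem_image.mp h
        have : b = a := by omega
        rwa [← this]
    exact Finset.Subset.antisymm (key _ _ heq) (key _ _ heq.symm)
  have himage : insert ({0} : Finset ℕ) (D'.image (fun B => insert 0 (B.image (fun b => b + 2))))
      ⊆ UU (n + 2) := by
    intro X hX
    rcases Finset.mem_insert.mp hX with rfl | hX
    · exact singleton_zero_mem_UU (by omega)
    · obtain ⟨B, hB, rfl⟩ := Finset.mem_image.mp hX
      exact hmem B hB
  have hnotin : ({0} : Finset ℕ) ∉ D'.image (fun B => insert 0 (B.image (fun b => b + 2))) := by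
    intro hcon
    obtain ⟨B, hB, hBeq⟩ := Finset.mem_image.mp hcon
    have h0B : 0 ∈ B := zero_mem_of_mem hn (Finset.mem_of_mem_erase hB)
    have : (2 : ℕ) ∈ insert 0 (B.image (fun b => b + 2)) :=
      Finset.mem_insert_of_mem (Finset.mem_image_of_mem _ h0B)
    rw [hBeq] at this
    simp at this
  have hcard1 : (insert ({0} : Finset ℕ)
      (D'.image (fun B => insert 0 (B.image (fun b => b + 2))))).card = D'.card + 1 := by
    rw [Finset.card_insert_of_notMem hnotin, Finset.card_image_of_injOn hinj]
  have hcard2 : D'.card = (DD n).card - 1 := Finset.card_erase_of_mem (range_mem_DD hn)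
  have hpos : 1 ≤ (DD n).card := Finset.card_pos.mpr ⟨_, range_mem_DD hn⟩
  have := Finset.card_le_card himage
  omega

lemma Bstar_mem {n : ℕ} (hn : 3 ≤ n) :
    insert 0 (Finset.Icc 2 (n - 1)) ∈ UU (n + 1) ∧
      insert 0 (Finset.Icc 2 (n - 1)) ∉ DD n := by
  set B := insert 0 (Finset.Icc 2 (n - 1)) with hBdef
  have hmemB : ∀ x, x ∈ B ↔ x = 0 ∨ (2 ≤ x ∧ x ≤ n - 1) := by
    intro x; simp [hBdef, Finset.mem_insert, Finset.mem_Icc]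
  have hsup : B.sup id = n - 1 := by
    apply le_antisymm
    · apply Finset.sup_le; intro b hb
      rcases (hmemB b).mp hb with rfl | hb2
      · simp
      · simp only [id]; omega
    · exact Finset.le_sup (f := id) ((hmemB (n-1)).mpr (Or.inr ⟨by omega, le_refl _⟩))
  constructor
  · rw [UU, Finset.mem_filter]
    constructor
    · rw [mem_DD, hsup]
      constructor
      · intro x hx
        rcases (hmemB x).mp hx with rfl | hx2
        · simp only [Finset.mem_range]; omega
        · simp only [Finset.mem_range]; omega
      · have harg : n + 1 - (n - 1) = 2 := by omega
        rw [harg, range_eq_add_range]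
        constructor
        · intro b hb c hc
          rcases (hmemB b).mp hb with rfl | hb2 <;> omega
        · intro x hx
          rcases Nat.lt_or_ge x 2 with hx2 | hx2
          · exact ⟨0, (hmemB 0).mpr (Or.inl rfl), x, by omega, by omega⟩
          · rcases Nat.lt_or_ge x n with hxn | hxn
            · exact ⟨x, (hmemB x).mpr (Or.inr ⟨by omega, by omega⟩), 0, by omega, by omega⟩
            · exact ⟨n - 1, (hmemB (n-1)).mpr (Or.inr ⟨by omega, le_refl _⟩), x - (n-1),
                by omega, by omega⟩
    · intro hcon
      have := (hmemB 1).mp hcon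
      omega
  · intro hcon
    obtain ⟨hsub, hP⟩ := mem_DD.mp hcon
    rw [hsup, range_eq_add_range] at hP
    obtain ⟨b, hb, c, hc, hbc⟩ := hP.2 1 (by omega)
    have hc0 : c = 0 := by omega
    have : b = 1 := by omega
    rw [this] at hb
    have := (hmemB 1).mp hb
    omega

lemma Ulem {n : ℕ} (hn : 3 ≤ n) : (UU n).card + 1 ≤ (UU (n + 1)).card := by
  classical
  obtain ⟨hmem, hnot⟩ := Bstar_mem hn
  have hnotU : insert 0 (Finset.Icc 2 (n - 1)) ∉ UU n := by
    intro hcon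
    exact hnot (Finset.mem_filter.mp hcon).1
  have hsub : insert (insert 0 (Finset.Icc 2 (n - 1))) (UU n) ⊆ UU (n + 1) := by
    intro X hX
    rcases Finset.mem_insert.mp hX with rfl | hX
    · exact hmem
    · exact UU_mono (by omega) hX
  have := Finset.card_le_card hsub
  rwa [Finset.card_insert_of_notMem hnotU] at this

lemma Xlem {n : ℕ} (hn : 3 ≤ n) : 3 * (DD n).card + 1 ≤ 2 * (DD (n + 1)).card := by
  obtain ⟨m, rfl⟩ : ∃ m, n = m + 3 := ⟨n - 3, by omega⟩
  have h1 := K1 (n := m + 3) (by omega)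
  have h2 := K1 (n := m + 2) (by omega)
  have h3 := V2 (n := m + 2) (by omega)
  have h4 := Ulem (n := m + 3) (by omega)
  simp only [show m + 3 + 1 = m + 4 from by omega, show m + 2 + 1 = m + 3 from by omega,
    show m + 2 + 2 = m + 4 from by omega] at h1 h2 h3 h4 ⊢
  omega

lemma Ylem {n : ℕ} (hn : 1 ≤ n) : 2 * (DD n).card + 1 ≤ (DD (n + 2)).card := by
  have h1 := K1 (n := n + 1) (by omega)
  have h2 := K1 (n := n) hn
  have h3 := V2 (n := n) hn
  have h4 := u_pos (n := n + 1) (by omega)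
  simp only [show n + 1 + 1 = n + 2 from by omega] at h1 h2 h3 h4 ⊢
  omega

lemma Llem : ∀ j, 3 ≤ j → ∀ k, j ≤ k →
    (j + 1) * (DD (k - j + 1)).card + 1 ≤ 2 * (DD k).card := by
  intro j
  induction j using Nat.strong_induction_on with
  | _ j IH =>
    intro hj k hk
    rcases Nat.lt_or_ge j 5 with hj5 | hj5
    · interval_cases j
      · -- j = 3
        have heq : k - 3 + 1 = k - 2 := by omega
        rw [heq]
        have hY := Ylem (n := k - 2) (by omega)
        have heq2 : k - 2 + 2 = k := by omega
        rw [heq2] at hY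
        omega
      · -- j = 4
        have heq : k - 4 + 1 = k - 3 := by omega
        rw [heq]
        have hX := Xlem (n := k - 1) (by omega)
        have heq2 : k - 1 + 1 = k := by omega
        rw [heq2] at hX
        have hY := Ylem (n := k - 3) (by omega)
        have heq3 : k - 3 + 2 = k - 1 := by omega
        rw [heq3] at hY
        omega
    · -- j ≥ 5, use IH at j - 2
      have hIH := IH (j - 2) (by omega) (by omega) k (by omega)
      have hY := Ylem (n := k - j + 1) (by omega)
      have heq : k - j + 1 + 2 = k - (j - 2) + 1 := by omega
      rw [heq] at hY
      set i := j - 2 with hi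
      have hji : j = i + 2 := by omega
      set D := (DD (k - j + 1)).card with hD
      set E := (DD (k - i + 1)).card with hE
      set F := (DD k).card with hF
      have h1 : (i + 1) * (2 * D + 1) ≤ (i + 1) * E := Nat.mul_le_mul_left _ hY
      have hexp1 : (i + 1) * (2 * D + 1) = 2 * (i * D) + 2 * D + i + 1 := by ring
      have hexp2 : (i + 1) * E = i * E + E := by ring
      have hexp3 : (j + 1) * D = i * D + 3 * D := by rw [hji]; ring
      have hDiD : D ≤ i * D := by
        calc D = 1 * D := (one_mul D).symm
        _ ≤ i * D := Nat.mul_le_mul_right _ (by omega)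
      omega

end SumDiv

theorem stmt13 (j k : ℕ) (hj : 1 ≤ j) (hjk : j ≤ k) :
    (j + 1) * numDivisors (Finset.range (k - j + 1)) ≤
        2 * numDivisors (Finset.range k) ∧
      ((j + 1) * numDivisors (Finset.range (k - j + 1)) =
          2 * numDivisors (Finset.range k) ↔ j = 1 ∨ (k = 3 ∧ j = 2)) := by
  have hk1 : 1 ≤ k := le_trans hj hjk
  have hkj1 : 1 ≤ k - j + 1 := by omega
  rw [SumDiv.numDiv_eq hkj1, SumDiv.numDiv_eq hk1]
  rcases Nat.lt_or_ge j 3 with hj3 | hj3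
  · interval_cases j
    · -- j = 1
      have heq : k - 1 + 1 = k := by omega
      rw [heq]
      constructor
      · omega
      · simp
    · -- j = 2
      have heq : k - 2 + 1 = k - 1 := by omega
      rw [heq]
      rcases Nat.lt_or_ge k 4 with hk4 | hk4
      · interval_cases k
        · -- k = 2
          rw [show (2:ℕ) - 1 = 1 from rfl, SumDiv.DD1, SumDiv.DD2]
          constructor
          · omega
          · constructor
            · omega
            · rintro (h | ⟨h, _⟩) <;> omega
        · -- k = 3
          rw [show (3:ℕ) - 1 = 2 from rfl, SumDiv.DD2, SumDiv.DD3]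
          constructor
          · omega
          · constructor
            · intro _; right; exact ⟨rfl, rfl⟩
            · intro _; omega
      · -- k ≥ 4
        have hX := SumDiv.Xlem (n := k - 1) (by omega)
        have heq2 : k - 1 + 1 = k := by omega
        rw [heq2] at hX
        constructor
        · omega
        · constructor
          · omega
          · rintro (h | ⟨h, _⟩) <;> omega
  · -- j ≥ 3
    have hL := SumDiv.Llem j hj3 k hjk
    set t := (j + 1) * (SumDiv.DD (k - j + 1)).card with ht
    constructor
    · omega
    · constructor
      · omega
      · rintro (h | ⟨_, h⟩) <;> omega
end

section
/- For k ≥ 1 and any nonempty A ⊆ {1,...,k} with A ≠ {1,...,k}, we have d({1,...,k}) ≥ d(A), where d counts sumset divisors; moreover the inequality is strict when k ≠ 3. -/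
open Pointwise

open Finset

/-- Gap predicate characterizing divisors of `range n`. -/
def Pg (n : ℕ) (B : Finset ℕ) : Prop :=
  0 ∈ B ∧ ∀ x < n, ∃ b ∈ B, b ≤ x ∧ ∀ m ∈ B, x + m < n + b

instance (n : ℕ) (B : Finset ℕ) : Decidable (Pg n B) := by
  unfold Pg; infer_instance

/-- The divisors of `range n` (all of which contain 0). -/
def Gd (n : ℕ) : Finset (Finset ℕ) := (range n).powerset.filter (Pg n)

/-- number of divisors of `range n`. -/
def Dd (n : ℕ) : ℕ := (Gd n).card

lemma mem_Gd {n : ℕ} {B : Finset ℕ} :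
    B ∈ Gd n ↔ B ⊆ range n ∧ Pg n B := by
  simp [Gd, Finset.mem_filter, Finset.mem_powerset]

lemma char_div {n : ℕ} (hn : 1 ≤ n) (B : Finset ℕ) :
    (∃ C, range n = B + C) ↔ B ∈ Gd n := by
  constructor
  · rintro ⟨C, hC⟩
    have hCne : C.Nonempty := by
      rcases Finset.eq_empty_or_nonempty C with h | h
      · exfalso
        have : (0:ℕ) ∈ range n := Finset.mem_range.2 hn
        rw [hC, h, Finset.add_empty] at this
        simp at this
      · exact h
    obtain ⟨c0, hc0⟩ := hCne
    have hBsub : B ⊆ range n := by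
      intro b hb
      have : b + c0 ∈ range n := by
        rw [hC]; exact Finset.add_mem_add hb hc0
      exact Finset.mem_range.2 (lt_of_le_of_lt (Nat.le_add_right _ _) (Finset.mem_range.1 this))
    refine mem_Gd.2 ⟨hBsub, ?_, ?_⟩
    · have h0 : (0:ℕ) ∈ range n := Finset.mem_range.2 hn
      rw [hC] at h0
      obtain ⟨b, hb, c, hc, hbc⟩ := Finset.mem_add.1 h0
      have : b = 0 := Nat.eq_zero_of_add_eq_zero_right hbc
      rwa [← this]
    · intro x hx
      have hxmem : x ∈ range n := Finset.mem_range.2 hx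
      rw [hC] at hxmem
      obtain ⟨b, hb, c, hc, hbc⟩ := Finset.mem_add.1 hxmem
      refine ⟨b, hb, by omega, ?_⟩
      intro m hm
      have : m + c ∈ range n := by rw [hC]; exact Finset.add_mem_add hm hc
      have := Finset.mem_range.1 this
      omega
  · intro hB
    obtain ⟨hBsub, h0, hP⟩ := mem_Gd.1 hB
    have hBne : B.Nonempty := ⟨0, h0⟩
    set β := B.max' hBne with hβ
    have hβmem : β ∈ B := B.max'_mem hBne
    have hβlt : β < n := Finset.mem_range.1 (hBsub hβmem)
    refine ⟨range (n - β), ?_⟩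
    apply Finset.Subset.antisymm
    · intro x hx
      have hxn : x < n := Finset.mem_range.1 hx
      obtain ⟨b, hb, hbx, hball⟩ := hP x hxn
      have hkey := hball β hβmem
      refine Finset.mem_add.2 ⟨b, hb, x - b, ?_, by omega⟩
      exact Finset.mem_range.2 (by omega)
    · intro x hx
      obtain ⟨b, hb, c, hc, hbc⟩ := Finset.mem_add.1 hx
      have hble : b ≤ β := B.le_max' b hb
      have hclt : c < n - β := Finset.mem_range.1 hc
      exact Finset.mem_range.2 (by omega)

lemma range_mem_Gd {n : ℕ} (hn : 1 ≤ n) : range n ∈ Gd n := by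
  refine mem_Gd.2 ⟨Finset.Subset.refl _, Finset.mem_range.2 hn, ?_⟩
  intro x hx
  exact ⟨x, Finset.mem_range.2 hx, le_refl x, fun m hm => by
    have := Finset.mem_range.1 hm; omega⟩

lemma singleton_mem_Gd {n : ℕ} (hn : 1 ≤ n) : ({0} : Finset ℕ) ∈ Gd n := by
  refine mem_Gd.2 ⟨by simp [Finset.singleton_subset_iff, Finset.mem_range]; omega, by simp, ?_⟩
  intro x hx
  exact ⟨0, by simp, Nat.zero_le x, fun m hm => by
    simp at hm; omega⟩

lemma rangeh_mem_Gd {n h : ℕ} (hh : h < n) : range (h+1) ∈ Gd n := by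
  refine mem_Gd.2 ⟨by intro x hx; simp at hx ⊢; omega, by simp, ?_⟩
  intro x hx
  refine ⟨min x h, by simp only [Finset.mem_range]; omega, by omega, ?_⟩
  intro m hm
  have := Finset.mem_range.1 hm
  omega

lemma Dd_pos {n : ℕ} (hn : 1 ≤ n) : 1 ≤ Dd n :=
  Finset.card_pos.2 ⟨{0}, singleton_mem_Gd hn⟩

lemma Gd_subset_succ {n : ℕ} (hn : 1 ≤ n) : Gd n ⊆ Gd (n+1) := by
  intro B hB
  obtain ⟨hBsub, h0, hP⟩ := mem_Gd.1 hB
  have hBne : B.Nonempty := ⟨0, h0⟩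
  refine mem_Gd.2 ⟨hBsub.trans (by intro x hx; simp at hx ⊢; omega), h0, ?_⟩
  intro x hx
  rcases Nat.lt_or_ge x n with h | h
  · obtain ⟨b, hb, hbx, hball⟩ := hP x h
    exact ⟨b, hb, hbx, fun m hm => by have := hball m hm; omega⟩
  · have hxn : x = n := by omega
    refine ⟨B.max' hBne, B.max'_mem hBne, ?_, ?_⟩
    · have := Finset.mem_range.1 (hBsub (B.max'_mem hBne)); omega
    · intro m hm
      have := B.le_max' m hm
      omega

lemma Dd_lt_succ {n : ℕ} (hn : 1 ≤ n) : Dd n < Dd (n+1) := by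
  apply Finset.card_lt_card
  refine ⟨Gd_subset_succ hn, fun hsub => ?_⟩
  have := hsub (range_mem_Gd (by omega : 1 ≤ n+1))
  obtain ⟨hs, _⟩ := mem_Gd.1 this
  have := hs (Finset.mem_range.2 (by omega : n < n + 1))
  simp at this

lemma Dd_mono {a b : ℕ} (ha : 1 ≤ a) (hab : a ≤ b) : Dd a ≤ Dd b := by
  induction b with
  | zero => omega
  | succ m ih =>
    rcases Nat.lt_or_ge a (m+1) with h | h
    · exact le_trans (ih (by omega)) (le_of_lt (Dd_lt_succ (by omega)))
    · have : a = m + 1 := by omega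
      rw [this]

lemma Dd_strict_mono {a b : ℕ} (ha : 1 ≤ a) (hab : a < b) : Dd a < Dd b := by
  have := Dd_lt_succ ha
  rcases Nat.lt_or_ge (a+1) b with h | h
  · exact lt_of_lt_of_le this (Dd_mono (by omega) (by omega))
  · have : b = a + 1 := by omega
    rw [this]; exact Dd_lt_succ ha
-- part 2 appended to p1 content when testing
lemma max_le_of_mem_Gd {n : ℕ} {X : Finset ℕ} (hX : X ∈ Gd n) (hne : X ≠ range n) :
    ∀ b ∈ X, b + 2 ≤ n := by
  obtain ⟨hsub, h0, hP⟩ := mem_Gd.1 hX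
  by_contra hcon
  push_neg at hcon
  obtain ⟨b0, hb0, hb0n⟩ := hcon
  have hb0lt : b0 < n := Finset.mem_range.1 (hsub hb0)
  have hb0eq : b0 = n - 1 := by omega
  -- then X = range n
  apply hne
  apply Finset.Subset.antisymm hsub
  intro x hx
  have hxn : x < n := Finset.mem_range.1 hx
  obtain ⟨b, hb, hbx, hball⟩ := hP x hxn
  have := hball b0 hb0
  have : b = x := by omega
  rwa [← this]

lemma f1_mem {n : ℕ} {X : Finset ℕ} (hX : X ∈ Gd (n+1)) :
    insert 0 (X.image (· + 1)) ∈ Gd (n+2) := by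
  obtain ⟨hsub, h0, hP⟩ := mem_Gd.1 hX
  refine mem_Gd.2 ⟨?_, by simp, ?_⟩
  · intro y hy
    simp only [Finset.mem_insert, Finset.mem_image] at hy
    rcases hy with rfl | ⟨x, hx, rfl⟩
    · simp
    · have := Finset.mem_range.1 (hsub hx)
      simp only [Finset.mem_range]; omega
  · intro x hx
    rcases Nat.eq_zero_or_pos x with rfl | hxpos
    · refine ⟨0, by simp, le_refl _, ?_⟩
      intro m hm
      simp only [Finset.mem_insert, Finset.mem_image] at hm
      rcases hm with rfl | ⟨z, hz, rfl⟩
      · omega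
      · have := Finset.mem_range.1 (hsub hz); omega
    · obtain ⟨b, hb, hbx, hball⟩ := hP (x-1) (by omega)
      refine ⟨b+1, by simp only [Finset.mem_insert, Finset.mem_image]; right; exact ⟨b, hb, rfl⟩,
        by omega, ?_⟩
      intro m hm
      simp only [Finset.mem_insert, Finset.mem_image] at hm
      rcases hm with rfl | ⟨z, hz, rfl⟩
      · omega
      · have := hball z hz; omega

lemma f2_mem {n : ℕ} {X : Finset ℕ} (hX : X ∈ Gd n) (hne : X ≠ range n) :
    insert 0 (X.image (· + 2)) ∈ Gd (n+2) := by
  obtain ⟨hsub, h0, hP⟩ := mem_Gd.1 hX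
  have hbd := max_le_of_mem_Gd hX hne
  refine mem_Gd.2 ⟨?_, by simp, ?_⟩
  · intro y hy
    simp only [Finset.mem_insert, Finset.mem_image] at hy
    rcases hy with rfl | ⟨x, hx, rfl⟩
    · simp
    · have := hbd x hx
      simp only [Finset.mem_range]; omega
  · intro x hx
    rcases Nat.lt_or_ge x 2 with hx2 | hx2
    · refine ⟨0, by simp, by omega, ?_⟩
      intro m hm
      simp only [Finset.mem_insert, Finset.mem_image] at hm
      rcases hm with rfl | ⟨z, hz, rfl⟩
      · omega
      · have := hbd z hz; omega
    · obtain ⟨b, hb, hbx, hball⟩ := hP (x-2) (by omega)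
      refine ⟨b+2, by simp only [Finset.mem_insert, Finset.mem_image]; right; exact ⟨b, hb, rfl⟩,
        by omega, ?_⟩
      intro m hm
      simp only [Finset.mem_insert, Finset.mem_image] at hm
      rcases hm with rfl | ⟨z, hz, rfl⟩
      · omega
      · have := hball z hz; omega

lemma shift_recover {t : ℕ} (X : Finset ℕ) :
    (X.image (· + t)).image (· - t) = X := by
  rw [Finset.image_image]
  have : ((· - t) ∘ (· + t) : ℕ → ℕ) = id := by
    funext x; simp
  rw [this, Finset.image_id]

lemma insert_zero_image_inj {t : ℕ} (ht : 1 ≤ t) {X Y : Finset ℕ}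
    (h : insert 0 (X.image (· + t)) = insert 0 (Y.image (· + t))) : X = Y := by
  have h1 : (insert 0 (X.image (· + t))).erase 0 = X.image (· + t) := by
    rw [Finset.erase_insert]
    simp only [Finset.mem_image]
    rintro ⟨x, hx, hxt⟩
    omega
  have h2 : (insert 0 (Y.image (· + t))).erase 0 = Y.image (· + t) := by
    rw [Finset.erase_insert]
    simp only [Finset.mem_image]
    rintro ⟨x, hx, hxt⟩
    omega
  have : X.image (· + t) = Y.image (· + t) := by rw [← h1, ← h2, h]
  have := congrArg (Finset.image (· - t)) this
  rwa [shift_recover, shift_recover] at this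

lemma C1 {n : ℕ} (hn : 1 ≤ n) : Dd (n+1) + Dd n ≤ Dd (n+2) := by
  classical
  set T1 := (Gd (n+2)).filter (fun X => 1 ∈ X) with hT1
  set T2 := (Gd (n+2)).filter (fun X => 1 ∉ X) with hT2
  have hsplit : T1.card + T2.card = Dd (n+2) := by
    rw [hT1, hT2, Dd]
    exact Finset.card_filter_add_card_filter_not _
  have h1 : Dd (n+1) ≤ T1.card := by
    apply Finset.card_le_card_of_injOn (fun X => insert 0 (X.image (· + 1)))
    · intro X hX
      rw [hT1, Finset.mem_coe, Finset.mem_filter]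
      refine ⟨f1_mem hX, ?_⟩
      have h0 : 0 ∈ X := (mem_Gd.1 hX).2.1
      simp only [Finset.mem_insert, Finset.mem_image]
      right; exact ⟨0, h0, rfl⟩
    · intro X _ Y _ h
      exact insert_zero_image_inj (le_refl 1) h
  have h2 : Dd n ≤ T2.card := by
    apply Finset.card_le_card_of_injOn
      (fun X => if X = range n then ({0} : Finset ℕ) else insert 0 (X.image (· + 2)))
    · intro X hX
      rw [hT2, Finset.mem_coe, Finset.mem_filter]
      by_cases hc : X = range n
      · simp only [hc, if_pos rfl]
        exact ⟨singleton_mem_Gd (by omega), by simp⟩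
      · simp only [if_neg hc]
        refine ⟨f2_mem hX hc, ?_⟩
        simp only [Finset.mem_insert, Finset.mem_image]
        push_neg
        exact ⟨by omega, fun x hx => by omega⟩
    · intro X hX Y hY h
      by_cases hcX : X = range n <;> by_cases hcY : Y = range n
      · rw [hcX, hcY]
      · exfalso
        simp only [if_pos hcX, if_neg hcY] at h
        have h0Y : 0 ∈ Y := (mem_Gd.1 hY).2.1
        have : (2:ℕ) ∈ insert 0 (Y.image (· + 2)) := by
          simp only [Finset.mem_insert, Finset.mem_image]
          right; exact ⟨0, h0Y, rfl⟩
        rw [← h] at this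
        simp at this
      · exfalso
        simp only [if_neg hcX, if_pos hcY] at h
        have h0X : 0 ∈ X := (mem_Gd.1 hX).2.1
        have : (2:ℕ) ∈ insert 0 (X.image (· + 2)) := by
          simp only [Finset.mem_insert, Finset.mem_image]
          right; exact ⟨0, h0X, rfl⟩
        rw [h] at this
        simp at this
      · simp only [if_neg hcX, if_neg hcY] at h
        exact insert_zero_image_inj (by omega : 1 ≤ 2) h
  omega
def mu (X : Finset ℕ) : Finset ℕ :=
  if 1 ∈ X then (X.erase 0).image (· - 1)
  else if X = {0} then {0}
  else insert 0 ((X.erase 0).image (· - 1))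

lemma image_sub_add {t : ℕ} {Y : Finset ℕ} (h : ∀ y ∈ Y, t ≤ y) :
    (Y.image (· - t)).image (· + t) = Y := by
  rw [Finset.image_image]
  ext z
  simp only [Finset.mem_image, Function.comp_apply]
  constructor
  · rintro ⟨y, hy, rfl⟩
    have := h y hy
    rwa [Nat.sub_add_cancel this]
  · intro hz
    exact ⟨z, hz, Nat.sub_add_cancel (h z hz)⟩

lemma mu_mem {n : ℕ} (hn : 1 ≤ n) {X : Finset ℕ} (hX : X ∈ Gd (n+1)) : mu X ∈ Gd n := by
  obtain ⟨hsub, h0, hP⟩ := mem_Gd.1 hX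
  unfold mu
  by_cases h1 : 1 ∈ X
  · simp only [if_pos h1]
    refine mem_Gd.2 ⟨?_, ?_, ?_⟩
    · intro y hy
      simp only [Finset.mem_image, Finset.mem_erase] at hy
      obtain ⟨z, ⟨hz0, hz⟩, rfl⟩ := hy
      have := Finset.mem_range.1 (hsub hz)
      simp only [Finset.mem_range]; omega
    · simp only [Finset.mem_image, Finset.mem_erase]
      exact ⟨1, ⟨by omega, h1⟩, rfl⟩
    · intro x hx
      obtain ⟨b, hb, hbx, hball⟩ := hP (x+1) (by omega)
      rcases Nat.eq_zero_or_pos b with rfl | hbpos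
      · refine ⟨0, by simp only [Finset.mem_image, Finset.mem_erase]; exact ⟨1, ⟨by omega, h1⟩, rfl⟩, by omega, ?_⟩
        intro m hm
        simp only [Finset.mem_image, Finset.mem_erase] at hm
        obtain ⟨z, ⟨hz0, hz⟩, rfl⟩ := hm
        have := hball z hz; omega
      · refine ⟨b - 1, by simp only [Finset.mem_image, Finset.mem_erase]; exact ⟨b, ⟨by omega, hb⟩, rfl⟩, by omega, ?_⟩
        intro m hm
        simp only [Finset.mem_image, Finset.mem_erase] at hm
        obtain ⟨z, ⟨hz0, hz⟩, rfl⟩ := hm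
        have := hball z hz; omega
  · by_cases h00 : X = {0}
    · simp only [if_neg h1, if_pos h00]
      exact singleton_mem_Gd hn
    · simp only [if_neg h1, if_neg h00]
      refine mem_Gd.2 ⟨?_, by simp, ?_⟩
      · intro y hy
        simp only [Finset.mem_insert, Finset.mem_image, Finset.mem_erase] at hy
        rcases hy with rfl | ⟨z, ⟨hz0, hz⟩, rfl⟩
        · simp only [Finset.mem_range]; omega
        · have := Finset.mem_range.1 (hsub hz)
          simp only [Finset.mem_range]; omega
      · intro x hx
        obtain ⟨b, hb, hbx, hball⟩ := hP (x+1) (by omega)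
        rcases Nat.eq_zero_or_pos b with rfl | hbpos
        · refine ⟨0, by simp, by omega, ?_⟩
          intro m hm
          simp only [Finset.mem_insert, Finset.mem_image, Finset.mem_erase] at hm
          rcases hm with rfl | ⟨z, ⟨hz0, hz⟩, rfl⟩
          · omega
          · have := hball z hz; omega
        · have hb2 : 2 ≤ b := by
            by_contra hlt
            have hb1 : b = 1 := by omega
            exact h1 (hb1 ▸ hb)
          refine ⟨b - 1, by simp only [Finset.mem_insert, Finset.mem_image, Finset.mem_erase]; right; exact ⟨b, ⟨by omega, hb⟩, rfl⟩, by omega, ?_⟩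
          intro m hm
          simp only [Finset.mem_insert, Finset.mem_image, Finset.mem_erase] at hm
          rcases hm with rfl | ⟨z, ⟨hz0, hz⟩, rfl⟩
          · omega
          · have := hball z hz; omega

lemma mu_fiber {X a : Finset ℕ} (h0 : 0 ∈ X) (hmu : mu X = a) :
    X = insert 0 (a.image (· + 1)) ∨
      X = (if a = {0} then ({0} : Finset ℕ) else insert 0 ((a.erase 0).image (· + 1))) := by
  unfold mu at hmu
  by_cases h1 : 1 ∈ X
  · left
    simp only [if_pos h1] at hmu
    have hrec : (a.image (· + 1)) = X.erase 0 := by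
      rw [← hmu, image_sub_add]
      intro y hy
      have := (Finset.mem_erase.1 hy).1
      omega
    rw [hrec, Finset.insert_erase h0]
  · by_cases h00 : X = {0}
    · right
      simp only [if_neg h1, if_pos h00] at hmu
      rw [if_pos hmu.symm, h00]
    · right
      simp only [if_neg h1, if_neg h00] at hmu
      have hzer : 0 ∉ (X.erase 0).image (· - 1) := by
        simp only [Finset.mem_image, Finset.mem_erase]
        rintro ⟨z, ⟨hz0, hz⟩, hzz⟩
        have hz1 : z = 1 := by omega
        exact h1 (hz1 ▸ hz)
      have hane : a ≠ {0} := by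
        rintro rfl
        have hZsub : (X.erase 0).image (· - 1) ⊆ {0} :=
          (Finset.subset_insert 0 _).trans (by rw [hmu])
        have hZemp : (X.erase 0).image (· - 1) = ∅ := by
          rcases Finset.eq_empty_or_nonempty ((X.erase 0).image (· - 1)) with h | h
          · exact h
          · obtain ⟨z, hz⟩ := h
            have := hZsub hz
            simp only [Finset.mem_singleton] at this
            exact absurd (this ▸ hz) hzer
        have hXe : X.erase 0 = ∅ := Finset.image_eq_empty.1 hZemp
        rcases (Finset.erase_eq_empty_iff X 0).1 hXe with h | h
        · rw [h] at h0; simp at h0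
        · exact h00 h
      rw [if_neg hane]
      have hera : a.erase 0 = (X.erase 0).image (· - 1) := by
        rw [← hmu, Finset.erase_insert hzer]
      rw [hera, image_sub_add, Finset.insert_erase h0]
      intro y hy
      have h1' := (Finset.mem_erase.1 hy).1
      have h2' := (Finset.mem_erase.1 hy).2
      -- y ∈ X, y ≠ 0, 1 ∉ X so y ≠ 1, hence 2 ≤ y... need 1 ≤ y only
      omega
lemma Dd_one : Dd 1 = 1 := by decide
lemma Dd_two : Dd 2 = 2 := by decide

lemma insert_zero_range {n : ℕ} : insert 0 ((range n).image (· + 1)) = range (n+1) := by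
  ext x
  simp only [Finset.mem_insert, Finset.mem_image, Finset.mem_range]
  constructor
  · rintro (rfl | ⟨a, ha, rfl⟩) <;> omega
  · intro h
    rcases Nat.eq_zero_or_pos x with rfl | hx
    · exact Or.inl rfl
    · exact Or.inr ⟨x - 1, by omega, by omega⟩

lemma C2 {n : ℕ} (hn : 1 ≤ n) : Dd (n+1) ≤ 2 * Dd n := by
  classical
  have hfib : ∀ a ∈ (Gd (n+1)).image mu,
      ((Gd (n+1)).filter (fun X => mu X = a)).card ≤ 2 := by
    intro a _
    have hsub : (Gd (n+1)).filter (fun X => mu X = a) ⊆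
        insert (insert 0 (a.image (· + 1)))
          {(if a = {0} then ({0} : Finset ℕ) else insert 0 ((a.erase 0).image (· + 1)))} := by
      intro X hX
      obtain ⟨hXG, hXmu⟩ := Finset.mem_filter.1 hX
      have h0 : 0 ∈ X := (mem_Gd.1 hXG).2.1
      rcases mu_fiber h0 hXmu with h | h
      · exact Finset.mem_insert.2 (Or.inl h)
      · exact Finset.mem_insert.2 (Or.inr (Finset.mem_singleton.2 h))
    calc ((Gd (n+1)).filter (fun X => mu X = a)).card ≤ _ := Finset.card_le_card hsub
      _ ≤ 2 := by
        apply le_trans (Finset.card_insert_le _ _)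
        simp
  have h1 : Dd (n+1) ≤ 2 * ((Gd (n+1)).image mu).card :=
    Finset.card_le_mul_card_image (Gd (n+1)) 2 hfib
  have h2 : (Gd (n+1)).image mu ⊆ Gd n := by
    intro a ha
    obtain ⟨X, hX, rfl⟩ := Finset.mem_image.1 ha
    exact mu_mem hn hX
  calc Dd (n+1) ≤ 2 * ((Gd (n+1)).image mu).card := h1
    _ ≤ 2 * Dd n := by
      have := Finset.card_le_card h2
      have hDd : Dd n = (Gd n).card := rfl
      omega

lemma C2s {n : ℕ} (hn : 2 ≤ n) : Dd (n+1) + 1 ≤ 2 * Dd n := by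
  classical
  set R := (Gd (n+1)).filter (fun X => mu X = range n) with hR
  set rest := (Gd (n+1)).filter (fun X => ¬ (mu X = range n)) with hrest
  have hsplit : R.card + rest.card = Dd (n+1) :=
    Finset.card_filter_add_card_filter_not _
  have hRcard : R.card ≤ 1 := by
    have hsub : R ⊆ {range (n+1)} := by
      intro X hX
      obtain ⟨hXG, hXmu⟩ := Finset.mem_filter.1 hX
      have h0 : 0 ∈ X := (mem_Gd.1 hXG).2.1
      rcases mu_fiber h0 hXmu with h | h
      · rw [insert_zero_range] at h
        exact Finset.mem_singleton.2 h
      · exfalso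
        have hrn : range n ≠ ({0} : Finset ℕ) := by
          intro hcon
          have : (1:ℕ) ∈ range n := Finset.mem_range.2 (by omega)
          rw [hcon] at this
          simp at this
        rw [if_neg hrn] at h
        -- X = insert 0 (((range n).erase 0).image (· + 1)); derive contradiction
        have hnX : n ∈ X := by
          rw [h]
          simp only [Finset.mem_insert, Finset.mem_image, Finset.mem_erase, Finset.mem_range]
          right
          exact ⟨n - 1, ⟨by omega, by omega⟩, by omega⟩
        have h1X : (1:ℕ) ∉ X := by
          rw [h]
          simp only [Finset.mem_insert, Finset.mem_image, Finset.mem_erase, Finset.mem_range]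
          push_neg
          refine ⟨by omega, ?_⟩
          intro z hz
          omega
        obtain ⟨_, _, hP⟩ := mem_Gd.1 hXG
        obtain ⟨b, hb, hb1, hball⟩ := hP 1 (by omega)
        have hb0 : b = 0 := by
          rcases Nat.lt_or_ge b 1 with hh | hh
          · omega
          · have : b = 1 := by omega
            rw [this] at hb
            exact absurd hb h1X
        have := hball n hnX
        omega
    exact le_trans (Finset.card_le_card hsub) (by simp)
  have hfib : ∀ a ∈ rest.image mu, (rest.filter (fun X => mu X = a)).card ≤ 2 := by
    intro a _
    have hsub : rest.filter (fun X => mu X = a) ⊆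
        insert (insert 0 (a.image (· + 1)))
          {(if a = {0} then ({0} : Finset ℕ) else insert 0 ((a.erase 0).image (· + 1)))} := by
      intro X hX
      obtain ⟨hXrest, hXmu⟩ := Finset.mem_filter.1 hX
      obtain ⟨hXG, _⟩ := Finset.mem_filter.1 hXrest
      have h0 : 0 ∈ X := (mem_Gd.1 hXG).2.1
      rcases mu_fiber h0 hXmu with h | h
      · exact Finset.mem_insert.2 (Or.inl h)
      · exact Finset.mem_insert.2 (Or.inr (Finset.mem_singleton.2 h))
    calc (rest.filter (fun X => mu X = a)).card ≤ _ := Finset.card_le_card hsub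
      _ ≤ 2 := by
        apply le_trans (Finset.card_insert_le _ _)
        simp
  have h1 : rest.card ≤ 2 * (rest.image mu).card :=
    Finset.card_le_mul_card_image rest 2 hfib
  have h2 : rest.image mu ⊆ (Gd n).erase (range n) := by
    intro a ha
    obtain ⟨X, hX, rfl⟩ := Finset.mem_image.1 ha
    obtain ⟨hXG, hXne⟩ := Finset.mem_filter.1 hX
    exact Finset.mem_erase.2 ⟨hXne, mu_mem (by omega) hXG⟩
  have h3 : ((Gd n).erase (range n)).card = Dd n - 1 :=
    Finset.card_erase_of_mem (range_mem_Gd (by omega))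
  have h4 : 1 ≤ Dd n := Dd_pos (by omega)
  have h5 := Finset.card_le_card h2
  omega

lemma DB {n : ℕ} (hn : 1 ≤ n) : 3 * Dd n ≤ 2 * Dd (n+1) := by
  rcases Nat.lt_or_ge n 2 with h | h
  · have : n = 1 := by omega
    subst this
    rw [Dd_one, Dd_two]
    norm_num
  · obtain ⟨m, rfl⟩ : ∃ m, n = m + 1 := ⟨n - 1, by omega⟩
    have hc1 := C1 (by omega : 1 ≤ m)
    have hc2 := C2 (by omega : 1 ≤ m)
    have he : m + 1 + 1 = m + 2 := by omega
    rw [he]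
    omega

lemma DBs {n : ℕ} (hn : 3 ≤ n) : 3 * Dd n + 1 ≤ 2 * Dd (n+1) := by
  obtain ⟨m, rfl⟩ : ∃ m, n = m + 1 := ⟨n - 1, by omega⟩
  have hc1 := C1 (by omega : 1 ≤ m)
  have hc2 := C2s (by omega : 2 ≤ m)
  have he : m + 1 + 1 = m + 2 := by omega
  rw [he]
  omega

lemma DB1s : 3 * Dd 1 + 1 ≤ 2 * Dd 2 := by
  rw [Dd_one, Dd_two]

lemma DL {j : ℕ} (hj : 2 ≤ j) : ∀ n, 1 ≤ n → (j + 2) * Dd n < 2 * Dd (n + j) := by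
  induction j, hj using Nat.le_induction with
  | base =>
    intro n hn
    have h1 := DB hn
    have h2 := DB (by omega : 1 ≤ n + 1)
    have h3 := Dd_pos hn
    have : n + 2 = n + 1 + 1 := by ring
    rw [this]
    omega
  | succ j hj ih =>
    intro n hn
    have h1 := ih n hn
    have h2 := DB (by omega : 1 ≤ n + j)
    have h3 := Dd_pos hn
    have : n + (j + 1) = n + j + 1 := by ring
    rw [this]
    nlinarith
lemma singleton_add_eq_image (t : ℕ) (X : Finset ℕ) : {t} + X = X.image (t + ·) := by
  rw [Finset.singleton_add]; rfl

lemma mem_singleton_add {t x : ℕ} {X : Finset ℕ} :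
    x ∈ ({t} : Finset ℕ) + X ↔ ∃ y ∈ X, t + y = x := by
  rw [singleton_add_eq_image]
  simp [Finset.mem_image]

lemma singleton_add_cancel {t : ℕ} {X Y : Finset ℕ} (h : {t} + X = {t} + Y) : X = Y := by
  rw [singleton_add_eq_image, singleton_add_eq_image] at h
  exact Finset.image_injective (fun a b hab => by omega) h

lemma unshift {t : ℕ} {X : Finset ℕ} (h : ∀ x ∈ X, t ≤ x) :
    {t} + X.image (· - t) = X := by
  ext z
  rw [mem_singleton_add]
  constructor
  · rintro ⟨y, hy, rfl⟩
    obtain ⟨x, hx, rfl⟩ := Finset.mem_image.1 hy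
    have := h x hx
    rwa [Nat.add_sub_cancel' this]
  · intro hz
    exact ⟨z - t, Finset.mem_image_of_mem _ hz, Nat.add_sub_cancel' (h z hz)⟩

lemma Icc_one_eq (k : ℕ) : Finset.Icc 1 k = {1} + range k := by
  ext x
  rw [mem_singleton_add]
  simp only [Finset.mem_Icc, Finset.mem_range]
  constructor
  · intro h
    exact ⟨x - 1, by omega, by omega⟩
  · rintro ⟨y, hy, rfl⟩
    omega

lemma div_nonempty {A B C : Finset ℕ} (hA : A.Nonempty) (h : A = B + C) :
    B.Nonempty ∧ C.Nonempty := by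
  constructor
  · rcases Finset.eq_empty_or_nonempty B with rfl | hB
    · rw [Finset.empty_add] at h
      rw [h] at hA
      exact absurd rfl (Finset.nonempty_iff_ne_empty.1 hA)
    · exact hB
  · rcases Finset.eq_empty_or_nonempty C with rfl | hC
    · rw [Finset.add_empty] at h
      rw [h] at hA
      exact absurd rfl (Finset.nonempty_iff_ne_empty.1 hA)
    · exact hC

lemma div_finite {A : Finset ℕ} (hA : A.Nonempty) :
    {B : Finset ℕ | ∃ C : Finset ℕ, A = B + C}.Finite := by
  apply Set.Finite.subset ((Finset.Icc 0 (A.max' hA)).powerset.finite_toSet)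
  rintro B ⟨C, hC⟩
  simp only [Finset.coe_powerset, Set.mem_preimage, Set.mem_powerset_iff, Finset.coe_subset,
    Finset.mem_coe]
  intro b hb
  obtain ⟨-, c, hc⟩ := div_nonempty hA hC
  have : b + c ∈ A := by rw [hC]; exact Finset.add_mem_add hb hc
  have := A.le_max' _ this
  simp only [Finset.mem_Icc]
  omega

lemma lower_bound {k : ℕ} (hk : 1 ≤ k) :
    2 * Dd k ≤ numDivisors (Finset.Icc 1 k) := by
  classical
  have hIcc : (Finset.Icc 1 k).Nonempty := ⟨1, by simp [Finset.mem_Icc]; omega⟩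
  set U : Finset (Finset ℕ) := Gd k ∪ (Gd k).image (fun B => B.image (· + 1)) with hU
  have hdisj : Disjoint (Gd k) ((Gd k).image (fun B => B.image (· + 1))) := by
    rw [Finset.disjoint_left]
    intro X hX hX'
    obtain ⟨B, hB, rfl⟩ := Finset.mem_image.1 hX'
    have h0 : (0:ℕ) ∈ B.image (· + 1) := (mem_Gd.1 hX).2.1
    simp only [Finset.mem_image] at h0
    obtain ⟨b, _, hb⟩ := h0
    omega
  have hcard : U.card = 2 * Dd k := by
    rw [hU, Finset.card_union_of_disjoint hdisj,
      Finset.card_image_of_injective _ (Finset.image_injective (fun a b hab => by omega))]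
    rw [Dd]; ring
  have hsub : ↑U ⊆ {B : Finset ℕ | ∃ C : Finset ℕ, Finset.Icc 1 k = B + C} := by
    intro X hX
    simp only [hU, Finset.coe_union, Set.mem_union, Finset.mem_coe, Finset.mem_image] at hX
    rcases hX with hX | hX
    · obtain ⟨C, hC⟩ := (char_div hk X).2 hX
      refine ⟨{1} + C, ?_⟩
      rw [Icc_one_eq, hC, add_left_comm]
    · obtain ⟨B, hB, rfl⟩ := Finset.mem_image.1 (Finset.mem_image.2 hX)
      obtain ⟨C, hC⟩ := (char_div hk B).2 hB
      refine ⟨C, ?_⟩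
      have himg : B.image (· + 1) = {1} + B := by
        rw [singleton_add_eq_image]
        apply Finset.image_congr
        intro x _
        show x + 1 = 1 + x
        omega
      rw [Icc_one_eq, hC, himg, ← add_assoc]
  calc 2 * Dd k = U.card := hcard.symm
    _ = (↑U : Set (Finset ℕ)).ncard := (Set.ncard_coe_finset U).symm
    _ ≤ numDivisors (Finset.Icc 1 k) := Set.ncard_le_ncard hsub (div_finite hIcc)
/-- predecessor of `x` in `B` (largest element of `B` that is `≤ x`). -/
def prB (B : Finset ℕ) (x : ℕ) : ℕ := ((B.filter (· ≤ x)).max).getD 0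

/-- The "fill" map: completes a divisor of `S` to a divisor of the enclosing interval. -/
def Phi (g : ℕ) (B : Finset ℕ) : Finset ℕ :=
  (range (B.max.getD 0 + 1)).filter (fun x => x ∈ B ∨ (g+1) ∣ (x - prB B x))

lemma prB_spec {B : Finset ℕ} (h0 : 0 ∈ B) (x : ℕ) :
    prB B x ∈ B ∧ prB B x ≤ x ∧ ∀ y ∈ B, y ≤ x → y ≤ prB B x := by
  have hne : (B.filter (· ≤ x)).Nonempty := ⟨0, Finset.mem_filter.2 ⟨h0, Nat.zero_le x⟩⟩
  have hmax : prB B x = (B.filter (· ≤ x)).max' hne := by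
    rw [prB, ← Finset.coe_max' hne]
    rfl
  have hmem := (B.filter (· ≤ x)).max'_mem hne
  rw [← hmax] at hmem
  obtain ⟨hB, hle⟩ := Finset.mem_filter.1 hmem
  refine ⟨hB, hle, ?_⟩
  intro y hy hyx
  have := (B.filter (· ≤ x)).le_max' y (Finset.mem_filter.2 ⟨hy, hyx⟩)
  rwa [← hmax] at this

lemma max_getD_spec {B : Finset ℕ} (h0 : 0 ∈ B) :
    B.max.getD 0 ∈ B ∧ ∀ y ∈ B, y ≤ B.max.getD 0 := by
  have hne : B.Nonempty := ⟨0, h0⟩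
  have hmax : B.max.getD 0 = B.max' hne := by
    rw [← Finset.coe_max' hne]; rfl
  rw [hmax]
  exact ⟨B.max'_mem hne, fun y hy => B.le_max' y hy⟩

section PhiProps

variable {S B C : Finset ℕ} (hSB : S = B + C) (h0B : 0 ∈ B) (h0S : 0 ∈ S)

/-- elements of C are at most `max S - max B`. -/
lemma c_le (hSB : S = B + C) (h0B : 0 ∈ B) (h0S : 0 ∈ S) :
    ∀ c ∈ C, B.max.getD 0 + c ≤ S.max.getD 0 := by
  intro c hc
  have hβ := (max_getD_spec h0B).1
  have : B.max.getD 0 + c ∈ S := by rw [hSB]; exact Finset.add_mem_add hβ hc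
  exact (max_getD_spec h0S).2 _ this

lemma B_subset_S (hSB : S = B + C) (h0B : 0 ∈ B) (h0S : 0 ∈ S) : B ⊆ S := by
  have h0C : 0 ∈ C := by
    have := h0S
    rw [hSB] at this
    obtain ⟨b, _, c, hc, hbc⟩ := Finset.mem_add.1 this
    have : c = 0 := by omega
    rwa [← this]
  intro b hb
  have : b + 0 ∈ B + C := Finset.add_mem_add hb h0C
  rw [← hSB] at this
  simpa using this

lemma B_subset_Phi {g : ℕ} (h0B : 0 ∈ B) : B ⊆ Phi g B := by
  intro b hb
  refine Finset.mem_filter.2 ⟨?_, Or.inl hb⟩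
  have := (max_getD_spec h0B).2 b hb
  simp only [Finset.mem_range]
  omega

lemma Phi_inter (hSB : S = B + C) (h0B : 0 ∈ B) (h0S : 0 ∈ S) :
    Phi (S.max.getD 0 - B.max.getD 0) B ∩ S = B := by
  apply Finset.Subset.antisymm
  · intro x hx
    obtain ⟨hxPhi, hxS⟩ := Finset.mem_inter.1 hx
    obtain ⟨hxrange, hxor⟩ := Finset.mem_filter.1 hxPhi
    by_contra hxB
    rcases hxor with h | hdvd
    · exact hxB h
    obtain ⟨hqB, hqx, hqmax⟩ := prB_spec h0B x
    set q := prB B x with hq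
    set γ := S.max.getD 0 - B.max.getD 0 with hγ
    have hxq : x ≠ q := fun h => hxB (h ▸ hqB)
    have hge : γ + 1 ≤ x - q := by
      rcases hdvd with ⟨d, hd⟩
      rcases Nat.eq_zero_or_pos d with rfl | hdpos
      · omega
      · have : (γ+1) * 1 ≤ (γ+1) * d := Nat.mul_le_mul_left _ hdpos
        omega
    -- x ∈ S: write x = b + c
    have hxS' := hxS
    rw [hSB] at hxS'
    obtain ⟨b, hb, c, hc, hbc⟩ := Finset.mem_add.1 hxS'
    have hbq : b ≤ q := hqmax b hb (by omega)
    have hcγ : c ≤ γ := by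
      have := c_le hSB h0B h0S c hc
      have hβS : B.max.getD 0 ≤ S.max.getD 0 := by
        have := (max_getD_spec h0S).2 _ ((B_subset_S hSB h0B h0S) (max_getD_spec h0B).1)
        exact this
      omega
    omega
  · intro b hb
    exact Finset.mem_inter.2 ⟨B_subset_Phi h0B hb, B_subset_S hSB h0B h0S hb⟩

lemma Phi_mem_Gd (hSB : S = B + C) (h0B : 0 ∈ B) (h0S : 0 ∈ S) :
    Phi (S.max.getD 0 - B.max.getD 0) B ∈ Gd (S.max.getD 0 + 1) := by
  set M0 := S.max.getD 0 with hM0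
  set β := B.max.getD 0 with hβ
  set γ := M0 - β with hγ
  have hβM : β ≤ M0 :=
    (max_getD_spec h0S).2 _ ((B_subset_S hSB h0B h0S) (max_getD_spec h0B).1)
  refine mem_Gd.2 ⟨?_, ?_, ?_⟩
  · intro x hx
    have := (Finset.mem_filter.1 hx).1
    simp only [Finset.mem_range] at this ⊢
    omega
  · exact B_subset_Phi h0B h0B
  · intro x hx
    rcases Nat.lt_or_ge β x with hxβ | hxβ
    · -- x > β : use β as the witness
      refine ⟨β, B_subset_Phi h0B (max_getD_spec h0B).1, by omega, ?_⟩
      intro m hm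
      have hmβ : m ≤ β := by
        have := (Finset.mem_filter.1 hm).1
        simp only [Finset.mem_range] at this
        omega
      omega
    · -- x ≤ β : use b* = x - ((x - q) % (γ+1))
      obtain ⟨hqB, hqx, hqmax⟩ := prB_spec h0B x
      set q := prB B x with hq
      set r := (x - q) % (γ + 1) with hr
      set bs := x - r with hbs
      have hmoddiv := Nat.mod_add_div (x - q) (γ + 1)
      have hrlt : r < γ + 1 := Nat.mod_lt _ (by omega)
      have hrle : r ≤ x - q := by rw [hr]; exact Nat.mod_le _ _
      have hqbs : q ≤ bs := by omega
      have hbsx : bs ≤ x := by omega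
      have hbsPhi : bs ∈ Phi γ B := by
        refine Finset.mem_filter.2 ⟨by simp only [Finset.mem_range]; omega, ?_⟩
        by_cases hbsB : bs ∈ B
        · exact Or.inl hbsB
        · right
          have hprbs : prB B bs = q := by
            obtain ⟨hq'B, hq'bs, hq'max⟩ := prB_spec h0B bs
            have h1 : q ≤ prB B bs := hq'max q hqB hqbs
            have h2 : prB B bs ≤ q := hqmax _ hq'B (by omega)
            omega
          rw [hprbs]
          exact ⟨(x - q) / (γ + 1), by omega⟩
      refine ⟨bs, hbsPhi, hbsx, ?_⟩
      intro m hm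
      have hmβ : m ≤ β := by
        have := (Finset.mem_filter.1 hm).1
        simp only [Finset.mem_range] at this
        omega
      omega

lemma Phi_eq_range {g h : ℕ} (h0B : 0 ∈ B) (heq : Phi g B = range (h+1)) :
    h ∈ B := by
  have hβPhi : B.max.getD 0 ∈ Phi g B := B_subset_Phi h0B (max_getD_spec h0B).1
  rw [heq] at hβPhi
  have h1 : B.max.getD 0 ≤ h := by
    have := Finset.mem_range.1 hβPhi
    omega
  have h2 : h ≤ B.max.getD 0 := by
    have : h ∈ Phi g B := by
      rw [heq]
      exact Finset.mem_range.2 (by omega)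
    have := (Finset.mem_filter.1 this).1
    have := Finset.mem_range.1 this
    omega
  have : h = B.max.getD 0 := by omega
  rw [this]
  exact (max_getD_spec h0B).1

end PhiProps
lemma min_getD_eq {B : Finset ℕ} (hB : B.Nonempty) : B.min.getD 0 = B.min' hB := by
  rw [← Finset.coe_min' hB]; rfl

lemma key_decomp {A B C : Finset ℕ} (hA : A.Nonempty) (hBC : A = B + C) :
    B.min.getD 0 ≤ A.min' hA ∧
    A.image (· - A.min' hA) = B.image (· - B.min.getD 0) + C.image (· - C.min.getD 0) ∧
    {B.min.getD 0} + B.image (· - B.min.getD 0) = B ∧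
    0 ∈ B.image (· - B.min.getD 0) ∧ 0 ∈ A.image (· - A.min' hA) := by
  obtain ⟨hB, hC⟩ := div_nonempty hA hBC
  set m := A.min' hA with hm
  set t := B.min.getD 0 with ht
  set s := C.min.getD 0 with hs
  have htm : t = B.min' hB := min_getD_eq hB
  have hsm : s = C.min' hC := min_getD_eq hC
  have htB : t ∈ B := htm ▸ B.min'_mem hB
  have hsC : s ∈ C := hsm ▸ C.min'_mem hC
  have htle : ∀ b ∈ B, t ≤ b := fun b hb => htm ▸ B.min'_le b hb
  have hsle : ∀ c ∈ C, s ≤ c := fun c hc => hsm ▸ C.min'_le c hc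
  have hmle : ∀ a ∈ A, m ≤ a := fun a ha => A.min'_le a ha
  have hts : t + s = m := by
    have h1 : t + s ∈ A := by rw [hBC]; exact Finset.add_mem_add htB hsC
    have h2 : m ≤ t + s := hmle _ h1
    have h3 : m ∈ A := A.min'_mem hA
    rw [hBC] at h3
    obtain ⟨b, hb, c, hc, hbc⟩ := Finset.mem_add.1 h3
    have := htle b hb
    have := hsle c hc
    omega
  have hBu : {t} + B.image (· - t) = B := unshift htle
  have hCu : {s} + C.image (· - s) = C := unshift hsle
  have hAu : {m} + A.image (· - m) = A := unshift hmle
  refine ⟨by omega, ?_, hBu, ?_, ?_⟩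
  · -- A₀ = B₀ + C₀
    have hmain : {m} + (B.image (· - t) + C.image (· - s)) = A := by
      rw [← hts, ← Finset.singleton_add_singleton, add_add_add_comm, hBu, hCu, hBC]
    apply singleton_add_cancel (t := m)
    rw [hAu, hmain]
  · exact Finset.mem_image.2 ⟨t, htB, by omega⟩
  · exact Finset.mem_image.2 ⟨m, A.min'_mem hA, by omega⟩

lemma A0_max {A : Finset ℕ} (hA : A.Nonempty) :
    (A.image (· - A.min' hA)).max.getD 0 = A.max' hA - A.min' hA := by
  set m := A.min' hA
  have h0 : 0 ∈ A.image (· - m) := Finset.mem_image.2 ⟨m, A.min'_mem hA, by omega⟩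
  obtain ⟨hmem, hub⟩ := max_getD_spec h0
  obtain ⟨a, ha, hae⟩ := Finset.mem_image.1 hmem
  have h1 : a ≤ A.max' hA := A.le_max' a ha
  have h2 : A.max' hA - m ∈ A.image (· - m) := Finset.mem_image.2 ⟨A.max' hA, A.max'_mem hA, rfl⟩
  have h3 := hub _ h2
  omega

lemma upper_general {A : Finset ℕ} (hA : A.Nonempty) (E : Finset (Finset ℕ))
    (hE : ∀ B C : Finset ℕ, A = B + C →
      Phi ((A.max' hA - A.min' hA) - (B.image (· - B.min.getD 0)).max.getD 0)
        (B.image (· - B.min.getD 0)) ∈ E) :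
    numDivisors A ≤ (A.min' hA + 1) * E.card := by
  classical
  set m := A.min' hA with hm
  set M := A.max' hA with hM
  set A0 := A.image (· - m) with hA0
  have hA0max : A0.max.getD 0 = M - m := A0_max hA
  set Psi : Finset ℕ → ℕ × Finset ℕ := fun B =>
    (B.min.getD 0,
      Phi ((M - m) - (B.image (· - B.min.getD 0)).max.getD 0) (B.image (· - B.min.getD 0)))
    with hPsi
  have hmaps : ∀ B ∈ {B : Finset ℕ | ∃ C : Finset ℕ, A = B + C},
      Psi B ∈ ↑((range (m+1)) ×ˢ E) := by
    rintro B ⟨C, hBC⟩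
    obtain ⟨ht, _, _, _, _⟩ := key_decomp hA hBC
    simp only [hPsi]
    exact Finset.mem_coe.2 (Finset.mem_product.2 ⟨Finset.mem_range.2 (by omega), hE B C hBC⟩)
  have hinj : Set.InjOn Psi {B : Finset ℕ | ∃ C : Finset ℕ, A = B + C} := by
    rintro B ⟨C, hBC⟩ B' ⟨C', hBC'⟩ heq
    obtain ⟨ht, hsum, hBu, h0B, h0A0⟩ := key_decomp hA hBC
    obtain ⟨ht', hsum', hBu', h0B', _⟩ := key_decomp hA hBC'
    have h1 : B.min.getD 0 = B'.min.getD 0 := congrArg Prod.fst heq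
    have h2 := congrArg Prod.snd heq
    simp only [hPsi] at h2
    -- use Phi_inter to recover B₀
    have hγ : (M - m) - (B.image (· - B.min.getD 0)).max.getD 0
        = A0.max.getD 0 - (B.image (· - B.min.getD 0)).max.getD 0 := by rw [hA0max]
    have hγ' : (M - m) - (B'.image (· - B'.min.getD 0)).max.getD 0
        = A0.max.getD 0 - (B'.image (· - B'.min.getD 0)).max.getD 0 := by rw [hA0max]
    have hrec : B.image (· - B.min.getD 0) =
        Phi ((M - m) - (B.image (· - B.min.getD 0)).max.getD 0) (B.image (· - B.min.getD 0)) ∩ A0 := by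
      rw [hγ, Phi_inter hsum h0B h0A0]
    have hrec' : B'.image (· - B'.min.getD 0) =
        Phi ((M - m) - (B'.image (· - B'.min.getD 0)).max.getD 0) (B'.image (· - B'.min.getD 0)) ∩ A0 := by
      rw [hγ', Phi_inter hsum' h0B' h0A0]
    have hB0eq : B.image (· - B.min.getD 0) = B'.image (· - B'.min.getD 0) := by
      rw [hrec, hrec', h2]
    rw [← hBu, ← hBu', hB0eq, h1]
  calc numDivisors A ≤ (↑((range (m+1)) ×ˢ E) : Set (ℕ × Finset ℕ)).ncard :=
        Set.ncard_le_ncard_of_injOn Psi hmaps hinj (Finset.finite_toSet _)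
    _ = ((range (m+1)) ×ˢ E).card := Set.ncard_coe_finset _
    _ = (m + 1) * E.card := by rw [Finset.card_product, Finset.card_range]

lemma upper {A : Finset ℕ} (hA : A.Nonempty) :
    numDivisors A ≤ (A.min' hA + 1) * Dd (A.max' hA - A.min' hA + 1) := by
  apply upper_general hA
  intro B C hBC
  obtain ⟨ht, hsum, hBu, h0B, h0A0⟩ := key_decomp hA hBC
  have hA0max : (A.image (· - A.min' hA)).max.getD 0 = A.max' hA - A.min' hA := A0_max hA
  have := Phi_mem_Gd hsum h0B h0A0
  rwa [hA0max] at this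

lemma upper_hole {A : Finset ℕ} (hA : A.Nonempty)
    (hhole : A.image (· - A.min' hA) ≠ range (A.max' hA - A.min' hA + 1)) :
    numDivisors A ≤ (A.min' hA + 1) * (Dd (A.max' hA - A.min' hA + 1) - 1) := by
  classical
  set m := A.min' hA with hm
  set M := A.max' hA with hM
  set l := M - m + 1 with hl
  set A0 := A.image (· - m) with hA0
  have h0A0 : 0 ∈ A0 := Finset.mem_image.2 ⟨m, A.min'_mem hA, by omega⟩
  have hA0sub : A0 ⊆ range l := by
    intro y hy
    obtain ⟨a, ha, rfl⟩ := Finset.mem_image.1 hy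
    have := A.le_max' a ha
    simp only [Finset.mem_range]
    omega
  obtain ⟨h, hhl, hhA0⟩ : ∃ h, h < l ∧ h ∉ A0 := by
    by_contra hcon
    push_neg at hcon
    apply hhole
    apply Finset.Subset.antisymm hA0sub
    intro y hy
    exact hcon y (Finset.mem_range.1 hy)
  have hrange_mem : range (h+1) ∈ Gd l := rangeh_mem_Gd hhl
  have hcard : ((Gd l).erase (range (h+1))).card = Dd l - 1 :=
    Finset.card_erase_of_mem hrange_mem
  rw [← hcard]
  apply upper_general hA
  intro B C hBC
  obtain ⟨ht, hsum, hBu, h0B, _⟩ := key_decomp hA hBC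
  have hA0max : A0.max.getD 0 = M - m := A0_max hA
  refine Finset.mem_erase.2 ⟨?_, ?_⟩
  · intro hcon
    have := Phi_eq_range h0B hcon
    have hhB : h ∈ A0 := (B_subset_S hsum h0B h0A0) this
    exact hhA0 hhB
  · have := Phi_mem_Gd hsum h0B h0A0
    rwa [hA0max] at this
lemma arith_le {m l k : ℕ} (hm : 1 ≤ m) (hl : 1 ≤ l) (hsum : m + l ≤ k + 1) :
    (m + 1) * Dd l ≤ 2 * Dd k := by
  rcases Nat.lt_or_ge m 2 with h1 | h1
  · -- m = 1
    have hm1 : m = 1 := by omega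
    subst hm1
    have : Dd l ≤ Dd k := Dd_mono hl (by omega)
    omega
  · rcases Nat.lt_or_ge m 3 with h2 | h2
    · -- m = 2
      have hm2 : m = 2 := by omega
      subst hm2
      have hk2 : 2 ≤ k := by omega
      have hmono : Dd l ≤ Dd (k - 1) := Dd_mono hl (by omega)
      have hdb : 3 * Dd (k - 1) ≤ 2 * Dd ((k-1)+1) := DB (by omega)
      have he : (k - 1) + 1 = k := by omega
      rw [he] at hdb
      omega
    · -- m ≥ 3
      obtain ⟨j, rfl⟩ : ∃ j, m = j + 1 := ⟨m - 1, by omega⟩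
      have hj : 2 ≤ j := by omega
      have hdl := DL hj l hl
      have hmono : Dd (l + j) ≤ Dd k := Dd_mono (by omega) (by omega)
      have he : j + 1 + 1 = j + 2 := by omega
      rw [he]
      omega

lemma arith_lt {m l k : ℕ} (hm : 1 ≤ m) (hl : 1 ≤ l) (hsum : m + l ≤ k + 1)
    (hex : ¬(m = 1 ∧ l = k)) (hk3 : k ≠ 3) : (m + 1) * Dd l < 2 * Dd k := by
  rcases Nat.lt_or_ge m 2 with h1 | h1
  · have hm1 : m = 1 := by omega
    subst hm1
    have hlk : l < k := by
      rcases Nat.lt_or_ge l k with h | h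
      · exact h
      · exact absurd ⟨rfl, by omega⟩ hex
    have : Dd l < Dd k := Dd_strict_mono hl hlk
    omega
  · rcases Nat.lt_or_ge m 3 with h2 | h2
    · have hm2 : m = 2 := by omega
      subst hm2
      have hk2 : 2 ≤ k := by omega
      rcases Nat.lt_or_ge l (k-1) with hcase | hcase
      · have hmono : Dd l < Dd (k - 1) := Dd_strict_mono hl hcase
        have hdb : 3 * Dd (k - 1) ≤ 2 * Dd ((k-1)+1) := DB (by omega)
        have he : (k - 1) + 1 = k := by omega
        rw [he] at hdb
        omega
      · have hlk : l = k - 1 := by omega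
        subst hlk
        rcases Nat.lt_or_ge k 3 with hk | hk
        · -- k = 2, l = 1
          have hk2' : k = 2 := by omega
          subst hk2'
          have := DB1s
          norm_num at this ⊢
          omega
        · -- k ≥ 4
          have hk4 : 4 ≤ k := by omega
          have hdbs : 3 * Dd (k-1) + 1 ≤ 2 * Dd ((k-1)+1) := DBs (by omega)
          have he : (k - 1) + 1 = k := by omega
          rw [he] at hdbs
          omega
    · obtain ⟨j, rfl⟩ : ∃ j, m = j + 1 := ⟨m - 1, by omega⟩
      have hj : 2 ≤ j := by omega
      have hdl := DL hj l hl
      have hmono : Dd (l + j) ≤ Dd k := Dd_mono (by omega) (by omega)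
      have he : j + 1 + 1 = j + 2 := by omega
      rw [he]
      omega

lemma arith_hole {m l k : ℕ} (hm : 1 ≤ m) (hl : 1 ≤ l) (hsum : m + l ≤ k + 1) :
    (m + 1) * (Dd l - 1) < 2 * Dd k := by
  have h1 : Dd l - 1 < Dd l := by
    have := Dd_pos hl
    omega
  have h2 : (m + 1) * (Dd l - 1) < (m + 1) * Dd l :=
    mul_lt_mul_of_pos_left h1 (by omega)
  exact lt_of_lt_of_le h2 (arith_le hm hl hsum)

theorem stmt14 (k : ℕ) (hk : 1 ≤ k) (A : Finset ℕ) (hA : A.Nonempty)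
    (hsub : A ⊆ Finset.Icc 1 k) (hne : A ≠ Finset.Icc 1 k) :
    numDivisors A ≤ numDivisors (Finset.Icc 1 k) ∧
      (k ≠ 3 → numDivisors A < numDivisors (Finset.Icc 1 k)) := by
  classical
  set m := A.min' hA with hm
  set M := A.max' hA with hM
  set l := M - m + 1 with hl
  have hmem_min := hsub (A.min'_mem hA)
  have hmem_max := hsub (A.max'_mem hA)
  rw [Finset.mem_Icc] at hmem_min hmem_max
  have hm1 : 1 ≤ m := hmem_min.1
  have hMk : M ≤ k := hmem_max.2
  have hmM : m ≤ M := A.min'_le _ (A.max'_mem hA)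
  have hl1 : 1 ≤ l := by omega
  have hsum : m + l ≤ k + 1 := by omega
  have hlow := lower_bound hk
  have hmle : ∀ a ∈ A, m ≤ a := fun a ha => A.min'_le a ha
  by_cases hcase : A.image (· - m) = range l
  · -- A is the interval Icc m M
    have hAeq : A = {m} + range l := by
      rw [← hcase]
      exact (unshift hmle).symm
    have hex : ¬(m = 1 ∧ l = k) := by
      rintro ⟨hm1', hlk⟩
      apply hne
      rw [hAeq, hm1', hlk, ← Icc_one_eq]
    have hup := upper hA
    rw [← hm, ← hM, ← hl] at hup
    constructor
    · have := arith_le hm1 hl1 hsum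
      omega
    · intro hk3
      have := arith_lt hm1 hl1 hsum hex hk3
      omega
  · have hup := upper_hole hA hcase
    rw [← hm, ← hM, ← hl] at hup
    have := arith_hole hm1 hl1 hsum
    constructor
    · omega
    · intro _
      omega
end
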